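/- Let $u:(0,+\infty)\to\overline{\mathrm{Dom}\phi}$. The following are equivalent: (a) $u$ is a continuous curve with values in $\mathrm{Dom}\phi$ satisfying the EVI$_\lambda$ differential inequality $\frac12\frac{d^+}{dt}d(u_t,v)^2+\frac\lambda2 d(u_t,v)^2\le\phi(v)-\phi(u_t)$ for all $t>0$ and $v\in\mathrm{Dom}\phi$; (b) the maps $t\mapsto\phi(u_t)$ and $t\mapsto d(u_t,v)^2$ are locally integrable on $(0,\infty)$ and $\frac12 d(u_t,v)^2-\frac12 d(u_s,v)^2+\int_s^t(\phi(u_r)+\frac\lambda2 d(u_r,v)^2)dr\le (t-s)\phi(v)$ for all $0<s<t$ and $v\in\mathrm{Dom}\phi$; (c) $\frac{e^{\lambda(t-s)}}2 d(u_t,v)^2-\frac12 d(u_s,v)^2\le \mathsf E_\lambda(t-s)\,(\phi(v)-\phi(u_t))$ for all $0<s<t$ and $v\in\mathrm{Dom}\phi$. In each case $t\mapsto\phi(u_t)$ is nonincreasing. -/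

import Mathlib

/-- Upper right Dini derivative, with values in `EReal`. -/
noncomputable def upperDiniDeriv (f : ℝ → ℝ) (t : ℝ) : EReal :=
  Filter.limsup (fun h => (((f (t + h) - f t) / h : ℝ) : EReal)) (nhdsWithin 0 (Set.Ioi 0))

/-- `E_λ(t) = ∫₀ᵗ e^{λ r} dr`. -/
noncomputable def Elam (lam t : ℝ) : ℝ :=
  if lam = 0 then t else (Real.exp (lam * t) - 1) / lam

/-- The pointwise `EVI_λ` differential inequality at time `t`. -/
noncomputable def EVIineq {X : Type*} [MetricSpace X]
    (φ : X → EReal) (lam : ℝ) (u : ℝ → X) (t : ℝ) : Prop :=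
  ∀ v : X, φ v ≠ ⊤ →
    ((1 / 2 : ℝ) : EReal) * upperDiniDeriv (fun s => dist (u s) v ^ 2) t +
      ((lam / 2 * dist (u t) v ^ 2 : ℝ) : EReal) ≤ φ v - φ (u t)

/-- A solution of `EVI_λ` on `(0, ∞)`: a continuous curve with values in `Dom φ`
satisfying the `EVI_λ` differential inequality. -/
noncomputable def IsEVISolution {X : Type*} [MetricSpace X]
    (φ : X → EReal) (lam : ℝ) (u : ℝ → X) : Prop :=
  ContinuousOn u (Set.Ioi 0) ∧ (∀ t ∈ Set.Ioi (0:ℝ), φ (u t) ≠ ⊤) ∧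
  ∀ t ∈ Set.Ioi (0:ℝ), EVIineq φ lam u t

open Filter Set MeasureTheory




lemma Elam_zero (lam : ℝ) : Elam lam 0 = 0 := by
  unfold Elam; split_ifs <;> simp

lemma Elam_pos {lam t : ℝ} (ht : 0 < t) : 0 < Elam lam t := by
  unfold Elam
  split_ifs with hl
  · exact ht
  · rcases lt_or_gt_of_ne hl with hneg | hpos
    · apply div_pos_of_neg_of_neg _ hneg
      simp only [sub_neg]
      have h2 : -(lam*t) + 1 ≤ Real.exp (-(lam*t)) := Real.add_one_le_exp _
      have h5 : Real.exp (lam*t) * Real.exp (-(lam*t)) = 1 := by rw [← Real.exp_add]; simp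
      nlinarith [Real.exp_pos (lam*t), mul_pos (neg_pos.mpr hneg) ht]
    · apply div_pos _ hpos
      have := Real.add_one_le_exp (lam * t)
      nlinarith [mul_pos hpos ht]

lemma Elam_nonneg {lam t : ℝ} (ht : 0 ≤ t) : 0 ≤ Elam lam t := by
  rcases eq_or_lt_of_le ht with rfl | h
  · simp [Elam_zero]
  · exact (Elam_pos h).le

lemma Elam_add (lam x h : ℝ) :
    Elam lam (x + h) = Elam lam x + Real.exp (lam * x) * Elam lam h := by
  unfold Elam
  split_ifs with hl
  · rw [hl]; simp
  · field_simp
    rw [mul_add, Real.exp_add]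
    ring

lemma Elam_le {lam t : ℝ} (h0 : 0 ≤ t) (h1 : t ≤ 1) : Elam lam t ≤ t * Real.exp |lam| := by
  have hexp1 : (1:ℝ) ≤ Real.exp |lam| := by
    nlinarith [Real.add_one_le_exp |lam|, abs_nonneg lam]
  unfold Elam
  split_ifs with hl
  · nlinarith
  rcases lt_or_gt_of_ne hl with hneg | hpos
  · rw [div_le_iff_of_neg hneg]
    have h2 : lam * t + 1 ≤ Real.exp (lam * t) := Real.add_one_le_exp _
    nlinarith [mul_nonneg h0 (neg_nonneg.mpr hneg.le)]
  · rw [div_le_iff₀ hpos]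
    have habs : |lam| = lam := abs_of_pos hpos
    rw [habs]
    have h2 : -(lam*t) + 1 ≤ Real.exp (-(lam*t)) := Real.add_one_le_exp _
    have h4 : Real.exp (lam*t) ≤ Real.exp lam := by
      apply Real.exp_le_exp.mpr; nlinarith
    have h5 : Real.exp (lam*t) * Real.exp (-(lam*t)) = 1 := by
      rw [← Real.exp_add]; simp
    have h6 : Real.exp (lam*t) * (-(lam*t) + 1) ≤ Real.exp (lam*t) * Real.exp (-(lam*t)) :=
      mul_le_mul_of_nonneg_left h2 (Real.exp_pos _).le
    have h7 : Real.exp (lam*t) * (lam*t) ≤ Real.exp lam * (lam*t) :=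
      mul_le_mul_of_nonneg_right h4 (mul_nonneg hpos.le h0)
    nlinarith [Real.exp_pos (lam*t), Real.exp_pos lam]

lemma continuous_Elam (lam : ℝ) : Continuous (Elam lam) := by
  unfold Elam
  split_ifs with hl
  · exact continuous_id
  · exact ((Real.continuous_exp.comp (continuous_const.mul continuous_id)).sub
      continuous_const).div_const lam

lemma tendsto_slope_right {g : ℝ → ℝ} {d x : ℝ} (h : HasDerivAt g d x) :
    Tendsto (fun y => (g y - g x) / (y - x)) (nhdsWithin x (Set.Ioi x)) (nhds d) := by
  have h1 := hasDerivAt_iff_tendsto_slope.mp h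
  have h2 : Tendsto (slope g x) (nhdsWithin x (Set.Ioi x)) (nhds d) :=
    h1.mono_left (nhdsWithin_mono _ (fun y hy => ne_of_gt hy))
  apply h2.congr
  intro y; rw [slope_def_field]

lemma hasDerivAt_Elam (lam : ℝ) : HasDerivAt (Elam lam) 1 0 := by
  unfold Elam
  split_ifs with hl
  · exact hasDerivAt_id' 0
  · have h1 : HasDerivAt (fun t => Real.exp (lam * t)) (Real.exp (lam * 0) * lam) 0 := by
      simpa using (((hasDerivAt_id (0:ℝ)).const_mul lam).exp)
    have h2 := (h1.sub_const 1).div_const lam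
    rw [mul_zero, Real.exp_zero, one_mul, div_self hl] at h2
    exact h2

lemma tendsto_Elam_div (lam : ℝ) :
    Tendsto (fun h => Elam lam h / h) (nhdsWithin 0 (Set.Ioi 0)) (nhds 1) := by
  have h := tendsto_slope_right (hasDerivAt_Elam lam)
  apply h.congr
  intro y; rw [Elam_zero]; ring_nf

lemma tendsto_exp_slope (lam : ℝ) :
    Tendsto (fun h => (1 - Real.exp (lam * h)) / h) (nhdsWithin 0 (Set.Ioi 0)) (nhds (-lam)) := by
  have h1 : HasDerivAt (fun t => 1 - Real.exp (lam * t)) (-lam) 0 := by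
    have hexp : HasDerivAt (fun t => Real.exp (lam * t)) (Real.exp (lam * id 0) * (lam * 1)) 0 :=
      (((hasDerivAt_id (0:ℝ)).const_mul lam).exp)
    exact ((hasDerivAt_const (0:ℝ) (1:ℝ)).sub hexp).congr_deriv (by simp)
  have h2 := tendsto_slope_right h1
  apply h2.congr
  intro y
  rw [mul_zero, Real.exp_zero]
  ring_nf

lemma EReal_le_coe_of_forall {x : EReal} {l : ℝ} (h : ∀ ε : ℝ, 0 < ε → x ≤ ((l + ε : ℝ) : EReal)) :
    x ≤ (l : EReal) := by
  induction x using EReal.rec with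
  | bot => exact bot_le
  | coe r =>
    rw [EReal.coe_le_coe_iff]
    apply le_of_forall_pos_le_add
    intro ε hε
    exact EReal.coe_le_coe_iff.mp (h ε hε)
  | top => exact absurd (h 1 one_pos) (not_le.mpr (EReal.coe_lt_top _))

lemma dini_le_of_eventually {f : ℝ → ℝ} {t l : ℝ} {R : ℝ → ℝ}
    (hev : ∀ᶠ h in nhdsWithin 0 (Set.Ioi 0), (f (t + h) - f t) / h ≤ R h)
    (hR : Tendsto R (nhdsWithin 0 (Set.Ioi 0)) (nhds l)) :
    upperDiniDeriv f t ≤ (l : EReal) := by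
  have hcoe : Tendsto (fun h => ((R h : ℝ) : EReal)) (nhdsWithin 0 (Set.Ioi 0)) (nhds (l : EReal)) :=
    (continuous_coe_real_ereal.tendsto l).comp hR
  have hls : Filter.limsup (fun h => ((R h : ℝ) : EReal)) (nhdsWithin 0 (Set.Ioi 0)) = (l : EReal) :=
    hcoe.limsup_eq
  calc upperDiniDeriv f t
      ≤ Filter.limsup (fun h => ((R h : ℝ) : EReal)) (nhdsWithin 0 (Set.Ioi 0)) := by
        apply Filter.limsup_le_limsup
        · filter_upwards [hev] with h hh
          exact EReal.coe_le_coe_iff.mpr hh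
        · exact Filter.isCobounded_le_of_bot
        · exact Filter.isBounded_le_of_top
    _ = (l : EReal) := hls

lemma eventually_slope_lt {f : ℝ → ℝ} {t l : ℝ}
    (h : upperDiniDeriv f t ≤ (l : EReal)) {ε : ℝ} (hε : 0 < ε) :
    ∀ᶠ h in nhdsWithin 0 (Set.Ioi 0), (f (t + h) - f t) / h < l + ε := by
  have hlt : upperDiniDeriv f t < ((l + ε : ℝ) : EReal) := by
    apply lt_of_le_of_lt h
    rw [EReal.coe_lt_coe_iff]; linarith
  have h2 := Filter.eventually_lt_of_limsup_lt hlt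
  filter_upwards [h2] with x hx
  exact EReal.coe_lt_coe_iff.mp hx


lemma ML {f B : ℝ → ℝ} {a b : ℝ} (hab : a ≤ b)
    (hB : ContinuousOn B (Set.Icc a b))
    (hleft : ∀ x ∈ Set.Ioc a b, ∀ ε > 0, ∀ᶠ y in nhdsWithin x (Set.Iio x),
      y ∈ Set.Ico a x → f x < f y + ε)
    (hslope : ∀ x ∈ Set.Ico a b, ∀ ε > 0, ∃ᶠ y in nhdsWithin x (Set.Ioi x),
      y ≤ b ∧ f y - f x ≤ B y - B x + ε * (y - x)) :
    f b - f a ≤ B b - B a := by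
  rcases eq_or_lt_of_le hab with rfl | hab'
  · simp
  have key : ∀ ε > 0, f b - f a ≤ B b - B a + ε * (b - a) := by
    intro ε hε
    set S : Set ℝ := {x | x ∈ Set.Icc a b ∧ f x - f a ≤ B x - B a + ε * (x - a)} with hS
    have haS : a ∈ S := by constructor <;> simp [hab]
    have hbdd : BddAbove S := ⟨b, fun x hx => hx.1.2⟩
    set c := sSup S with hc
    have hac : a ≤ c := le_csSup hbdd haS
    have hcb : c ≤ b := csSup_le ⟨a, haS⟩ (fun x hx => hx.1.2)
    have hcS : c ∈ S := by
      rcases eq_or_lt_of_le hac with heq | hac'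
      · exact heq ▸ haS
      by_contra hns
      have hgt : B c - B a + ε * (c - a) < f c - f a := by
        by_contra hle
        exact hns ⟨⟨hac, hcb⟩, le_of_not_gt hle⟩
      set η := (f c - f a - (B c - B a + ε * (c - a))) / 3 with hηdef
      have hη : 0 < η := by simp only [hηdef]; linarith
      have h1 := hleft c ⟨hac', hcb⟩ η hη
      obtain ⟨l, hl, hlsub⟩ := mem_nhdsLT_iff_exists_Ioo_subset.mp h1
      have hBc : ContinuousWithinAt B (Set.Icc a b) c := hB c ⟨hac, hcb⟩
      have h2 : ∀ᶠ y in nhdsWithin c (Set.Icc a b), |B y - B c| < η := by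
        have := hBc.tendsto
        rw [Metric.tendsto_nhds] at this
        filter_upwards [this η hη] with y hy
        simpa [Real.dist_eq] using hy
      obtain ⟨δ, hδ, hδsub⟩ := Metric.mem_nhdsWithin_iff.mp h2
      have hlt' : max l (c - δ) < c := by
        simp only [max_lt_iff]
        exact ⟨hl, by linarith⟩
      obtain ⟨y₀, hy₀S, hy₀gt⟩ := exists_lt_of_lt_csSup ⟨a, haS⟩ hlt'
      have hy₀c : y₀ ≤ c := le_csSup hbdd hy₀S
      rcases eq_or_lt_of_le hy₀c with rfl | hy₀c'
      · exact hns hy₀S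
      have hy₀l : l < y₀ := lt_of_le_of_lt (le_max_left _ _) hy₀gt
      have hy₀δ : c - δ < y₀ := lt_of_le_of_lt (le_max_right _ _) hy₀gt
      have hf : f c < f y₀ + η :=
        hlsub ⟨hy₀l, hy₀c'⟩ ⟨hy₀S.1.1, hy₀c'⟩
      have hBy : |B y₀ - B c| < η := by
        apply hδsub
        constructor
        · rw [Metric.mem_ball, Real.dist_eq, abs_lt]
          constructor <;> linarith
        · exact hy₀S.1
      have hy₀ineq := hy₀S.2
      have habs := abs_lt.mp hBy
      have hεy : ε * (y₀ - a) ≤ ε * (c - a) := by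
        apply mul_le_mul_of_nonneg_left _ (le_of_lt hε); linarith
      simp only [hηdef] at hf hgt ⊢
      linarith
    rcases eq_or_lt_of_le hcb with heq | hcb'
    · rw [heq] at hcS; exact hcS.2
    exfalso
    have hfreq := hslope c ⟨hac, hcb'⟩ ε hε
    rw [Filter.frequently_iff] at hfreq
    obtain ⟨y, hymem, hyb, hyineq⟩ := hfreq (self_mem_nhdsWithin)
    have hyc : c < y := hymem
    have hyS : y ∈ S := by
      refine ⟨⟨le_trans hac (le_of_lt hyc), hyb⟩, ?_⟩
      have := hcS.2
      nlinarith [hε.le]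
    exact absurd (le_csSup hbdd hyS) (not_le.mpr hyc)
  by_contra hcon
  push_neg at hcon
  have hba : 0 < b - a := by linarith
  set ε := (f b - f a - (B b - B a)) / (2 * (b - a)) with hε
  have hεpos : 0 < ε := by
    apply div_pos (by linarith) (by linarith)
  have := key ε hεpos
  rw [hε] at this
  have h2 : (f b - f a - (B b - B a)) / (2 * (b - a)) * (b - a)
      = (f b - f a - (B b - B a)) / 2 := by
    field_simp
  rw [h2] at this
  linarith




lemma ereal_sub_eq {a b : EReal} (ha1 : a ≠ ⊤) (ha2 : a ≠ ⊥) (hb1 : b ≠ ⊤) (hb2 : b ≠ ⊥) :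
    a - b = ((a.toReal - b.toReal : ℝ) : EReal) := by
  rw [EReal.coe_sub, EReal.coe_toReal ha1 ha2, EReal.coe_toReal hb1 hb2]

section EVIhelp

variable {X : Type*} [MetricSpace X] {φ : X → EReal} {lam : ℝ} {u : ℝ → X}

lemma evi_extract {t : ℝ} {v : X} (hv1 : φ v ≠ ⊤) (hv2 : φ v ≠ ⊥)
    (hu1 : φ (u t) ≠ ⊤) (hu2 : φ (u t) ≠ ⊥) (hEVI : EVIineq φ lam u t) :
    upperDiniDeriv (fun s => dist (u s) v ^ 2) t ≤
      ((2 * ((φ v).toReal - (φ (u t)).toReal) - lam * dist (u t) v ^ 2 : ℝ) : EReal) := by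
  have h := hEVI v hv1
  rw [ereal_sub_eq hv1 hv2 hu1 hu2] at h
  obtain ⟨D, hD⟩ : ∃ D, D = upperDiniDeriv (fun s => dist (u s) v ^ 2) t := ⟨_, rfl⟩
  rw [← hD] at h ⊢
  have hDtop : D ≠ ⊤ := by
    intro hDt
    rw [hDt, EReal.coe_mul_top_of_pos (by norm_num : (0:ℝ) < 1/2), EReal.top_add_coe] at h
    exact absurd h (not_le.mpr (EReal.coe_lt_top _))
  rcases eq_or_ne D ⊥ with hDb | hDb
  · rw [hDb]; exact bot_le
  lift D to ℝ using ⟨hDtop, hDb⟩ with d hd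
  rw [← EReal.coe_mul, ← EReal.coe_add, EReal.coe_le_coe_iff] at h
  rw [EReal.coe_le_coe_iff]
  linarith

lemma evi_make_pt {t : ℝ} {v : X} (hv1 : φ v ≠ ⊤) (hv2 : φ v ≠ ⊥)
    (hu1 : φ (u t) ≠ ⊤) (hu2 : φ (u t) ≠ ⊥)
    (hD : upperDiniDeriv (fun s => dist (u s) v ^ 2) t ≤
      ((2 * ((φ v).toReal - (φ (u t)).toReal) - lam * dist (u t) v ^ 2 : ℝ) : EReal)) :
    ((1 / 2 : ℝ) : EReal) * upperDiniDeriv (fun s => dist (u s) v ^ 2) t +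
      ((lam / 2 * dist (u t) v ^ 2 : ℝ) : EReal) ≤ φ v - φ (u t) := by
  rw [ereal_sub_eq hv1 hv2 hu1 hu2]
  obtain ⟨D, hD'⟩ : ∃ D, D = upperDiniDeriv (fun s => dist (u s) v ^ 2) t := ⟨_, rfl⟩
  rw [← hD'] at hD ⊢
  have hDtop : D ≠ ⊤ := by
    intro hDt
    rw [hDt] at hD
    exact absurd hD (not_le.mpr (EReal.coe_lt_top _))
  rcases eq_or_ne D ⊥ with hDb | hDb
  · rw [hDb, EReal.coe_mul_bot_of_pos (by norm_num : (0:ℝ) < 1/2), EReal.bot_add]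
    exact bot_le
  lift D to ℝ using ⟨hDtop, hDb⟩ with d hd
  rw [EReal.coe_le_coe_iff] at hD
  rw [← EReal.coe_mul, ← EReal.coe_add, EReal.coe_le_coe_iff]
  linarith

end EVIhelp

section Cside

variable {X : Type*} [MetricSpace X] {φ : X → EReal} {lam : ℝ} {u : ℝ → X}

/-- real form of hypothesis (C) -/
lemma C_real (hbot : ∀ y, φ y ≠ ⊥)
    (hC : ∀ s t : ℝ, 0 < s → s < t → ∀ v : X, φ v ≠ ⊤ →
      ((Real.exp (lam * (t - s)) / 2 * dist (u t) v ^ 2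
          - 1 / 2 * dist (u s) v ^ 2 : ℝ) : EReal) ≤
        ((Elam lam (t - s) : ℝ) : EReal) * (φ v - φ (u t)))
    {s t : ℝ} (hs : 0 < s) (hst : s < t) {v : X} (hv : φ v ≠ ⊤) (hut : φ (u t) ≠ ⊤) :
    Real.exp (lam * (t - s)) / 2 * dist (u t) v ^ 2 - 1 / 2 * dist (u s) v ^ 2 ≤
      Elam lam (t - s) * ((φ v).toReal - (φ (u t)).toReal) := by
  have h := hC s t hs hst v hv
  rw [ereal_sub_eq hv (hbot v) hut (hbot (u t)), ← EReal.coe_mul, EReal.coe_le_coe_iff] at h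
  exact h

lemma C_ne_top (hbot : ∀ y, φ y ≠ ⊥) (hproper : ∃ y, φ y ≠ ⊤)
    (hC : ∀ s t : ℝ, 0 < s → s < t → ∀ v : X, φ v ≠ ⊤ →
      ((Real.exp (lam * (t - s)) / 2 * dist (u t) v ^ 2
          - 1 / 2 * dist (u s) v ^ 2 : ℝ) : EReal) ≤
        ((Elam lam (t - s) : ℝ) : EReal) * (φ v - φ (u t)))
    {t : ℝ} (ht : 0 < t) : φ (u t) ≠ ⊤ := by
  intro htop
  obtain ⟨v, hv⟩ := hproper
  have h := hC (t/2) t (by linarith) (by linarith) v hv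
  rw [htop, EReal.sub_top,
    EReal.coe_mul_bot_of_pos (Elam_pos (by linarith : (0:ℝ) < t - t/2))] at h
  exact EReal.coe_ne_bot _ (le_bot_iff.mp h)

lemma C_mono (hbot : ∀ y, φ y ≠ ⊥) (hproper : ∃ y, φ y ≠ ⊤)
    (hC : ∀ s t : ℝ, 0 < s → s < t → ∀ v : X, φ v ≠ ⊤ →
      ((Real.exp (lam * (t - s)) / 2 * dist (u t) v ^ 2
          - 1 / 2 * dist (u s) v ^ 2 : ℝ) : EReal) ≤
        ((Elam lam (t - s) : ℝ) : EReal) * (φ v - φ (u t)))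
    {s t : ℝ} (hs : 0 < s) (hst : s ≤ t) :
    (φ (u t)).toReal ≤ (φ (u s)).toReal := by
  rcases eq_or_lt_of_le hst with heq | h
  · rw [heq]
  have hut := C_ne_top hbot hproper hC (hs.trans h)
  have hus := C_ne_top hbot hproper hC hs
  have h2 := C_real hbot hC hs h hus hut
  have hE := Elam_pos (lam := lam) (by linarith : (0:ℝ) < t - s)
  rw [dist_self] at h2
  by_contra hcon
  push_neg at hcon
  have h3 : Elam lam (t-s) * ((φ (u s)).toReal - (φ (u t)).toReal) < 0 :=
    mul_neg_of_pos_of_neg hE (by linarith)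
  have h4 : 0 ≤ Real.exp (lam*(t-s))/2 * dist (u t) (u s) ^ 2 := by positivity
  nlinarith

lemma dist_bound_aux {lam Δ d2 ψd M : ℝ} (hΔ : 0 < Δ) (hΔ1 : Δ ≤ 1)
    (hd2 : 0 ≤ d2) (hψ1 : ψd ≤ M + 1) (hψ0 : 0 ≤ ψd)
    (h : Real.exp (lam * Δ)/2 * d2 ≤ Elam lam Δ * ψd) :
    d2 ≤ 2 * Real.exp |lam| * Real.exp |lam| * (M+1) * Δ := by
  have hM1 : 0 ≤ M + 1 := le_trans hψ0 hψ1
  have hEl : Elam lam Δ ≤ Δ * Real.exp |lam| := Elam_le hΔ.le hΔ1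
  have hE0 : 0 ≤ Elam lam Δ := Elam_nonneg hΔ.le
  have hstep : Elam lam Δ * ψd ≤ (Δ * Real.exp |lam|) * (M+1) :=
    mul_le_mul hEl hψ1 hψ0 (by positivity)
  have hexp : Real.exp (-|lam|) ≤ Real.exp (lam * Δ) := by
    apply Real.exp_le_exp.mpr
    have h1 : |lam| * Δ ≤ |lam| := by nlinarith [abs_nonneg lam]
    have h2 : -(|lam| * Δ) ≤ lam * Δ := by nlinarith [neg_abs_le lam, abs_nonneg lam]
    linarith
  have hmul := mul_le_mul_of_nonneg_right hexp hd2
  have h0 : Real.exp (-|lam|)/2 * d2 ≤ (Δ * Real.exp |lam|) * (M+1) := by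
    have : Real.exp (-|lam|)/2 * d2 ≤ Real.exp (lam * Δ)/2 * d2 := by linarith
    linarith
  have hkey : (2*Real.exp |lam|) * (Real.exp (-|lam|)/2 * d2) = d2 := by
    rw [Real.exp_neg]; field_simp
  calc d2 = (2*Real.exp |lam|) * (Real.exp (-|lam|)/2 * d2) := hkey.symm
    _ ≤ (2*Real.exp |lam|) * ((Δ * Real.exp |lam|) * (M+1)) :=
        mul_le_mul_of_nonneg_left h0 (by positivity)
    _ = 2 * Real.exp |lam| * Real.exp |lam| * (M+1) * Δ := by ring

lemma C_contAt (hbot : ∀ y, φ y ≠ ⊥) (hproper : ∃ y, φ y ≠ ⊤)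
    (hC : ∀ s t : ℝ, 0 < s → s < t → ∀ v : X, φ v ≠ ⊤ →
      ((Real.exp (lam * (t - s)) / 2 * dist (u t) v ^ 2
          - 1 / 2 * dist (u s) v ^ 2 : ℝ) : EReal) ≤
        ((Elam lam (t - s) : ℝ) : EReal) * (φ v - φ (u t)))
    {t₀ : ℝ} (ht₀ : 0 < t₀) : ContinuousAt u t₀ := by
  rw [Metric.continuousAt_iff]
  intro ε hε
  set M := (φ (u (t₀/2))).toReal - (φ (u (2*t₀))).toReal with hM
  have hM0 : 0 ≤ M := sub_nonneg.mpr (C_mono hbot hproper hC (by linarith) (by linarith))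
  set CC := 2 * Real.exp |lam| * Real.exp |lam| * (M+1) with hCC
  have hCC0 : 0 < CC := by
    apply mul_pos (by positivity) (by linarith)
  have key : ∀ x, dist x t₀ < min (t₀/2) 1 → dist (u x) (u t₀) ^ 2 ≤ CC * |x - t₀| := by
    intro x hx
    rw [Real.dist_eq] at hx
    have hx1 : |x - t₀| < t₀/2 := lt_of_lt_of_le hx (min_le_left _ _)
    have hx2 : |x - t₀| < 1 := lt_of_lt_of_le hx (min_le_right _ _)
    have hxa := abs_lt.mp hx1
    have hxpos : 0 < x := by linarith [hxa.1]
    rcases lt_trichotomy x t₀ with hlt | heq | hgt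
    · have habs : |x - t₀| = t₀ - x := by rw [abs_of_neg (by linarith)]; ring
      have h2 := C_real hbot hC hxpos hlt (C_ne_top hbot hproper hC hxpos)
        (C_ne_top hbot hproper hC ht₀)
      rw [dist_self] at h2
      have h2' : Real.exp (lam * (t₀ - x))/2 * dist (u t₀) (u x) ^ 2 ≤
          Elam lam (t₀ - x) * ((φ (u x)).toReal - (φ (u t₀)).toReal) := by
        have hz : (1:ℝ)/2 * (0:ℝ)^2 = 0 := by norm_num
        linarith [h2, hz]
      have hψub : (φ (u x)).toReal - (φ (u t₀)).toReal ≤ M + 1 := by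
        have e1 : (φ (u x)).toReal ≤ (φ (u (t₀/2))).toReal :=
          C_mono hbot hproper hC (by linarith) (by linarith [habs ▸ hx1])
        have e2 : (φ (u (2*t₀))).toReal ≤ (φ (u t₀)).toReal :=
          C_mono hbot hproper hC ht₀ (by linarith)
        rw [hM]; linarith
      have hψ0 : 0 ≤ (φ (u x)).toReal - (φ (u t₀)).toReal :=
        sub_nonneg.mpr (C_mono hbot hproper hC hxpos hlt.le)
      have := dist_bound_aux (by linarith : 0 < t₀ - x) (by rw [habs] at hx2; linarith)
        (by positivity) hψub hψ0 h2'
      rw [dist_comm, habs, hCC]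
      linarith
    · rw [heq]; simp [dist_self]
    · have habs : |x - t₀| = x - t₀ := abs_of_pos (by linarith)
      have h2 := C_real hbot hC ht₀ hgt (C_ne_top hbot hproper hC ht₀)
        (C_ne_top hbot hproper hC hxpos)
      rw [dist_self] at h2
      have h2' : Real.exp (lam * (x - t₀))/2 * dist (u x) (u t₀) ^ 2 ≤
          Elam lam (x - t₀) * ((φ (u t₀)).toReal - (φ (u x)).toReal) := by
        have hz : (1:ℝ)/2 * (0:ℝ)^2 = 0 := by norm_num
        linarith [h2, hz]
      have hψub : (φ (u t₀)).toReal - (φ (u x)).toReal ≤ M + 1 := by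
        have e1 : (φ (u t₀)).toReal ≤ (φ (u (t₀/2))).toReal :=
          C_mono hbot hproper hC (by linarith) (by linarith)
        have e2 : (φ (u (2*t₀))).toReal ≤ (φ (u x)).toReal :=
          C_mono hbot hproper hC hxpos (by linarith [hxa.2])
        rw [hM]; linarith
      have hψ0 : 0 ≤ (φ (u t₀)).toReal - (φ (u x)).toReal :=
        sub_nonneg.mpr (C_mono hbot hproper hC ht₀ hgt.le)
      have := dist_bound_aux (by linarith : 0 < x - t₀) (by rw [habs] at hx2; linarith)
        (by positivity) hψub hψ0 h2'
      rw [habs, hCC]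
      linarith
  refine ⟨min (min (t₀/2) 1) (ε^2/(CC+1)), ?_, ?_⟩
  · apply lt_min (lt_min (by linarith) one_pos)
    apply div_pos (by positivity) (by linarith)
  · intro y hy
    have h1 := key y (lt_of_lt_of_le hy (min_le_left _ _))
    have h2 : |y - t₀| < ε^2/(CC+1) := by
      rw [← Real.dist_eq]
      exact lt_of_lt_of_le hy (min_le_right _ _)
    have h3 : dist (u y) (u t₀) ^ 2 < ε ^ 2 := by
      apply lt_of_le_of_lt h1
      have s1 : CC * |y - t₀| < CC * (ε^2/(CC+1)) := by
        apply mul_lt_mul_of_pos_left h2 hCC0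
      apply lt_of_lt_of_le s1
      have hq : ε^2/(CC+1)*(CC+1) = ε^2 := div_mul_cancel₀ _ (by linarith)
      have hq0 : (0:ℝ) ≤ ε^2/(CC+1) := by positivity
      nlinarith
    exact lt_of_pow_lt_pow_left₀ 2 hε.le h3

end Cside


lemma shift_eventually {x : ℝ} {P : ℝ → Prop}
    (h : ∀ᶠ h in nhdsWithin 0 (Set.Ioi 0), P h) :
    ∀ᶠ y in nhdsWithin x (Set.Ioi x), P (y - x) := by
  obtain ⟨d, hd, hsub⟩ := mem_nhdsGT_iff_exists_Ioo_subset.mp h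
  apply mem_nhdsGT_iff_exists_Ioo_subset.mpr
  refine ⟨x + d, by simp only [mem_Ioi]; linarith [mem_Ioi.mp hd], ?_⟩
  intro y hy
  exact hsub ⟨by linarith [hy.1], by linarith [hy.2]⟩

lemma eventually_slope_lt' {g : ℝ → ℝ} {x l : ℝ}
    (h : upperDiniDeriv g x ≤ (l : EReal)) {ε : ℝ} (hε : 0 < ε) :
    ∀ᶠ y in nhdsWithin x (Set.Ioi x), (g y - g x) / (y - x) < l + ε := by
  have h1 := eventually_slope_lt h hε
  have h2 := shift_eventually (x := x) h1
  filter_upwards [h2] with y hy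
  have hxy : x + (y - x) = y := by ring
  rwa [hxy] at hy

lemma tendsto_sub_Ioi (x : ℝ) :
    Tendsto (fun y => y - x) (nhdsWithin x (Set.Ioi x)) (nhdsWithin 0 (Set.Ioi 0)) := by
  apply tendsto_nhdsWithin_of_tendsto_nhds_of_eventually_within
  · have : Tendsto (fun y : ℝ => y - x) (nhds x) (nhds (x - x)) :=
      ((continuous_id.sub continuous_const).tendsto x)
    rw [sub_self] at this
    exact this.mono_left nhdsWithin_le_nhds
  · filter_upwards [self_mem_nhdsWithin] with y hy
    simp only [mem_Ioi] at hy ⊢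
    linarith

lemma hasDerivAt_w (lam b x : ℝ) :
    HasDerivAt (fun y => Real.exp (lam * (y - b))) (Real.exp (lam * (x - b)) * lam) x := by
  have h := (((hasDerivAt_id x).sub_const b).const_mul lam).exp
  simpa using h


lemma left_cont_hyp {f : ℝ → ℝ} {c t : ℝ} (hc0 : 0 < c)
    (hf : ∀ x, 0 < x → ContinuousAt f x) :
    ∀ x ∈ Set.Ioc c t, ∀ ε > 0, ∀ᶠ y in nhdsWithin x (Set.Iio x),
      y ∈ Set.Ico c x → f x < f y + ε := by
  intro x hx ε hε
  have h1 := (hf x (lt_trans hc0 hx.1)).tendsto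
  rw [Metric.tendsto_nhds] at h1
  filter_upwards [(h1 ε hε).filter_mono nhdsWithin_le_nhds] with y hy _
  rw [Real.dist_eq, abs_lt] at hy
  linarith [hy.1]

section Aside

variable {X : Type*} [MetricSpace X] {φ : X → EReal} {lam : ℝ} {u : ℝ → X}

lemma A_mono (hbot : ∀ y, φ y ≠ ⊥) (hlsc : LowerSemicontinuous φ)
    (hcont : ContinuousOn u (Set.Ioi 0)) (hne : ∀ t ∈ Set.Ioi (0:ℝ), φ (u t) ≠ ⊤)
    (hevi : ∀ t ∈ Set.Ioi (0:ℝ), EVIineq φ lam u t) {s t : ℝ} (hs : 0 < s) (hst : s ≤ t) :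
    (φ (u t)).toReal ≤ (φ (u s)).toReal := by
  rcases eq_or_lt_of_le hst with heq | hst'
  · rw [heq]
  by_contra hcon
  push_neg at hcon
  set S := {r | r ∈ Set.Icc s t ∧ (φ (u r)).toReal ≤ (φ (u s)).toReal} with hS
  have hsS : s ∈ S := ⟨⟨le_refl s, hst'.le⟩, le_refl _⟩
  have hbdd : BddAbove S := ⟨t, fun r hr => hr.1.2⟩
  set c := sSup S with hc
  have hsc : s ≤ c := le_csSup hbdd hsS
  have hct : c ≤ t := csSup_le ⟨s, hsS⟩ (fun r hr => hr.1.2)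
  have hc0 : 0 < c := lt_of_lt_of_le hs hsc
  have hcS : c ∈ S := by
    refine ⟨⟨hsc, hct⟩, ?_⟩
    by_contra hcc
    push_neg at hcc
    have hφc : φ (u c) ≠ ⊤ := hne c hc0
    have hlt : (((φ (u s)).toReal : ℝ) : EReal) < φ (u c) := by
      rw [← EReal.coe_toReal hφc (hbot (u c)), EReal.coe_lt_coe_iff]; exact hcc
    have hev := hlsc (u c) _ hlt
    have huc : ContinuousAt u c := hcont.continuousAt (Ioi_mem_nhds hc0)
    have hev2 : ∀ᶠ r in nhds c, (((φ (u s)).toReal : ℝ) : EReal) < φ (u r) :=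
      huc.eventually hev
    rw [Metric.eventually_nhds_iff] at hev2
    obtain ⟨δ, hδ, hball⟩ := hev2
    obtain ⟨r, hrS, hrgt⟩ := exists_lt_of_lt_csSup ⟨s, hsS⟩ (show c - δ < c by linarith)
    have hrc : r ≤ c := le_csSup hbdd hrS
    have hrφ : (((φ (u s)).toReal : ℝ) : EReal) < φ (u r) := by
      apply hball
      rw [Real.dist_eq, abs_lt]; constructor <;> linarith
    have hr_top : φ (u r) ≠ ⊤ := hne r (by linarith [hrS.1.1] : (0:ℝ) < r)
    rw [← EReal.coe_toReal hr_top (hbot (u r)), EReal.coe_lt_coe_iff] at hrφ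
    exact absurd hrS.2 (not_le.mpr hrφ)
  have hct' : c < t := by
    rcases eq_or_lt_of_le hct with heq2 | h
    · exfalso; rw [heq2] at hcS; linarith [hcS.2]
    · exact h
  -- ML on [c, t] with v = u c
  set v := u c with hv
  have hvtop : φ v ≠ ⊤ := hne c hc0
  set m : ℝ → ℝ := fun r => dist (u r) v ^ 2 with hm
  set f : ℝ → ℝ := fun r => Real.exp (lam * (r - c)) * m r with hf
  have hML : f t - f c ≤ (fun _ : ℝ => (0:ℝ)) t - (fun _ : ℝ => (0:ℝ)) c := by
    apply ML hct'.le continuousOn_const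
    · apply left_cont_hyp hc0
      intro x hx0
      have hux : ContinuousAt u x := hcont.continuousAt (Ioi_mem_nhds hx0)
      apply ContinuousAt.mul
      · exact (Real.continuous_exp.comp
          (continuous_const.mul (continuous_id.sub continuous_const))).continuousAt
      · exact (hux.dist continuousAt_const).pow 2
    · -- slope condition
      intro x hx ε hε
      have hx0 : 0 < x := lt_of_lt_of_le hc0 hx.1
      have hψx : (φ (u c)).toReal ≤ (φ (u x)).toReal := by
        rcases eq_or_lt_of_le hx.1 with heq | hlt
        · rw [← heq]
        · have hxS : x ∉ S := fun hmem => absurd (le_csSup hbdd hmem) (not_le.mpr hlt)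
          have hxgt : ¬ ((φ (u x)).toReal ≤ (φ (u s)).toReal) := fun hle =>
            hxS ⟨⟨le_trans hsc hx.1, hx.2.le⟩, hle⟩
          push_neg at hxgt
          linarith [hcS.2]
      set wf : ℝ → ℝ := fun y => Real.exp (lam * (y - c)) with hwf
      have hwx : 0 < wf x := Real.exp_pos _
      set ε'' := ε / (wf x + 1) with hε''
      have hε''p : 0 < ε'' := div_pos hε (by linarith)
      have hDini := evi_extract (v := v) hvtop (hbot v) (hne x hx0) (hbot (u x))
        (hevi x hx0)
      have hslope1 := eventually_slope_lt' hDini hε''p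
      set l := 2 * ((φ v).toReal - (φ (u x)).toReal) - lam * dist (u x) v ^ 2 with hl
      have hT1 : Tendsto wf (nhdsWithin x (Set.Ioi x)) (nhds (wf x)) :=
        ((Real.continuous_exp.comp
          (continuous_const.mul (continuous_id.sub continuous_const))).tendsto x).mono_left
          nhdsWithin_le_nhds
      have hT2 : Tendsto (fun y => (wf y - wf x)/(y - x)) (nhdsWithin x (Set.Ioi x))
          (nhds (wf x * lam)) := tendsto_slope_right (hasDerivAt_w lam c x)
      have hQ : Tendsto (fun y => wf y * (l + ε'') + (wf y - wf x)/(y-x) * m x)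
          (nhdsWithin x (Set.Ioi x)) (nhds (wf x * (l + ε'') + wf x * lam * m x)) :=
        (hT1.mul tendsto_const_nhds).add (hT2.mul tendsto_const_nhds)
      have hlim : wf x * (l + ε'') + wf x * lam * m x < ε := by
        have hid : wf x * (l + ε'') + wf x * lam * m x
            = 2 * wf x * ((φ v).toReal - (φ (u x)).toReal) + wf x * ε'' := by
          rw [hl, hm]; ring
        have h1 : (φ v).toReal - (φ (u x)).toReal ≤ 0 := by
          rw [hv]; linarith
        have h2 : wf x * ε'' < ε := by
          rw [hε'']
          rw [mul_div_assoc']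
          rw [div_lt_iff₀ (by linarith : (0:ℝ) < wf x + 1)]
          nlinarith
        nlinarith
      have hev1 : ∀ᶠ y in nhdsWithin x (Set.Ioi x),
          wf y * (l + ε'') + (wf y - wf x)/(y-x) * m x < ε :=
        hQ.eventually_lt_const hlim
      have hev2 : ∀ᶠ y in nhdsWithin x (Set.Ioi x), y < t :=
        ((isOpen_Iio.eventually_mem hx.2).filter_mono nhdsWithin_le_nhds)
      have hev3 : ∀ᶠ y in nhdsWithin x (Set.Ioi x), x < y := by
        filter_upwards [self_mem_nhdsWithin] with y hy
        exact hy
      apply ((hslope1.and (hev1.and (hev2.and hev3))).frequently).mono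
      rintro y ⟨hs1, hq, hyt, hxy⟩
      refine ⟨hyt.le, ?_⟩
      have hyx : 0 < y - x := by linarith
      have hmy : m y - m x ≤ (l + ε'') * (y - x) := by
        simp only [hm]
        linarith [(div_lt_iff₀ hyx).mp hs1]
      have hw_y : 0 < wf y := Real.exp_pos _
      have hb1 : wf y * (m y - m x) ≤ wf y * ((l + ε'')*(y-x)) :=
        mul_le_mul_of_nonneg_left hmy hw_y.le
      have hb2 : (wf y - wf x) * m x = (wf y - wf x)/(y - x) * m x * (y - x) := by
        field_simp
      have hq' : (wf y * (l + ε'') + (wf y - wf x)/(y-x) * m x) * (y - x) ≤ ε * (y - x) :=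
        mul_le_mul_of_nonneg_right hq.le hyx.le
      have hfid : f y - f x = wf y * (m y - m x) + (wf y - wf x) * m x := by
        simp only [hf, hwf, hm]; ring
      calc f y - f x = wf y * (m y - m x) + (wf y - wf x) * m x := hfid
        _ ≤ wf y * ((l + ε'')*(y-x)) + (wf y - wf x)/(y-x)*m x*(y-x) := by
            rw [← hb2]; linarith
        _ = (wf y * (l + ε'') + (wf y - wf x)/(y-x) * m x) * (y - x) := by ring
        _ ≤ ε * (y - x) := hq'
        _ = (fun _ : ℝ => (0:ℝ)) y - (fun _ : ℝ => (0:ℝ)) x + ε * (y - x) := by simp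
  have hML' : f t - f c ≤ (0:ℝ) - 0 := hML
  have hfc0 : f c = 0 := by
    simp only [hf, hm]; simp [dist_self, hv]
  rw [hfc0] at hML'
  have hft : Real.exp (lam * (t - c)) * m t ≤ 0 := by
    have hid : f t = Real.exp (lam * (t - c)) * m t := rfl
    linarith [hid ▸ hML']
  have hmn : 0 ≤ m t := by simp only [hm]; positivity
  have hm0 : m t = 0 := by
    by_contra hne0
    have hpos : 0 < m t := lt_of_le_of_ne hmn (Ne.symm hne0)
    have := mul_pos (Real.exp_pos (lam * (t - c))) hpos
    linarith
  have huev : u t = v := by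
    simp only [hm] at hm0
    have := pow_eq_zero_iff (n := 2) (by norm_num) |>.mp hm0
    exact dist_eq_zero.mp this
  have heqψ : (φ (u t)).toReal = (φ (u c)).toReal := by rw [huev, hv]
  linarith [hcS.2]



lemma A_to_C_real (hbot : ∀ y, φ y ≠ ⊥)
    (hcont : ContinuousOn u (Set.Ioi 0)) (hne : ∀ t ∈ Set.Ioi (0:ℝ), φ (u t) ≠ ⊤)
    (hevi : ∀ t ∈ Set.Ioi (0:ℝ), EVIineq φ lam u t)
    (hmono : ∀ ⦃p q : ℝ⦄, 0 < p → p ≤ q → (φ (u q)).toReal ≤ (φ (u p)).toReal)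
    {v : X} (hv : φ v ≠ ⊤) {s t : ℝ} (hs : 0 < s) (hst : s < t) :
    Real.exp (lam * (t - s)) * dist (u t) v ^ 2 - dist (u s) v ^ 2 ≤
      2 * ((φ v).toReal - (φ (u t)).toReal) * Elam lam (t - s) := by
  set a := (φ v).toReal with ha
  set bb := (φ (u t)).toReal with hbb
  set m : ℝ → ℝ := fun r => dist (u r) v ^ 2 with hm
  set f : ℝ → ℝ := fun r => Real.exp (lam * (r - s)) * m r with hf
  set B : ℝ → ℝ := fun r => 2 * (a - bb) * Elam lam (r - s) with hB
  have hML : f t - f s ≤ B t - B s := by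
    apply ML hst.le
    · apply Continuous.continuousOn
      exact continuous_const.mul ((continuous_Elam lam).comp (continuous_id.sub continuous_const))
    · apply left_cont_hyp hs
      intro x hx0
      have hux : ContinuousAt u x := hcont.continuousAt (Ioi_mem_nhds hx0)
      apply ContinuousAt.mul
      · exact (Real.continuous_exp.comp
          (continuous_const.mul (continuous_id.sub continuous_const))).continuousAt
      · exact (hux.dist continuousAt_const).pow 2
    · intro x hx ε hε
      have hx0 : 0 < x := lt_of_lt_of_le hs hx.1
      have hψx : bb ≤ (φ (u x)).toReal := by
        rw [hbb]; exact hmono hx0 hx.2.le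
      set wf : ℝ → ℝ := fun y => Real.exp (lam * (y - s)) with hwf
      have hwx : 0 < wf x := Real.exp_pos _
      set ε'' := ε / (2 * (wf x + 1)) with hε''
      have hε''p : 0 < ε'' := div_pos hε (by linarith)
      have hDini := evi_extract (v := v) hv (hbot v) (hne x hx0) (hbot (u x)) (hevi x hx0)
      have hslope1 := eventually_slope_lt' hDini hε''p
      set l := 2 * (a - (φ (u x)).toReal) - lam * dist (u x) v ^ 2 with hl
      have hT1 : Tendsto wf (nhdsWithin x (Set.Ioi x)) (nhds (wf x)) :=
        ((Real.continuous_exp.comp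
          (continuous_const.mul (continuous_id.sub continuous_const))).tendsto x).mono_left
          nhdsWithin_le_nhds
      have hT2 : Tendsto (fun y => (wf y - wf x)/(y - x)) (nhdsWithin x (Set.Ioi x))
          (nhds (wf x * lam)) := tendsto_slope_right (hasDerivAt_w lam s x)
      have hQ1 : Tendsto (fun y => wf y * (l + ε'') + (wf y - wf x)/(y-x) * m x)
          (nhdsWithin x (Set.Ioi x)) (nhds (wf x * (l + ε'') + wf x * lam * m x)) :=
        (hT1.mul tendsto_const_nhds).add (hT2.mul tendsto_const_nhds)
      have hEl : Tendsto (fun y => Elam lam (y - x)/(y - x)) (nhdsWithin x (Set.Ioi x))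
          (nhds 1) := (tendsto_Elam_div lam).comp (tendsto_sub_Ioi x)
      have hQ2 : Tendsto (fun y => 2*(a - bb) * wf x * (Elam lam (y-x)/(y-x)) + ε)
          (nhdsWithin x (Set.Ioi x)) (nhds (2*(a - bb) * wf x * 1 + ε)) :=
        (tendsto_const_nhds.mul hEl).add tendsto_const_nhds
      have hlt12 : wf x * (l + ε'') + wf x * lam * m x < 2*(a - bb) * wf x * 1 + ε := by
        have hid : wf x * (l + ε'') + wf x * lam * m x
            = 2 * wf x * (a - (φ (u x)).toReal) + wf x * ε'' := by
          rw [hl, hm]; ring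
        have h1 : a - (φ (u x)).toReal ≤ a - bb := by linarith
        have h2 : 2 * wf x * (a - (φ (u x)).toReal) ≤ 2 * wf x * (a - bb) := by
          apply mul_le_mul_of_nonneg_left h1 (by linarith)
        have h3 : wf x * ε'' < ε := by
          rw [hε'', mul_div_assoc', div_lt_iff₀ (by linarith : (0:ℝ) < 2*(wf x + 1))]
          nlinarith
        rw [hid]
        nlinarith
      have hev1 := hQ1.eventually_lt hQ2 hlt12
      have hev2 : ∀ᶠ y in nhdsWithin x (Set.Ioi x), y < t :=
        ((isOpen_Iio.eventually_mem hx.2).filter_mono nhdsWithin_le_nhds)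
      have hev3 : ∀ᶠ y in nhdsWithin x (Set.Ioi x), x < y := by
        filter_upwards [self_mem_nhdsWithin] with y hy
        exact hy
      apply ((hslope1.and (hev1.and (hev2.and hev3))).frequently).mono
      rintro y ⟨hs1, hq, hyt, hxy⟩
      refine ⟨hyt.le, ?_⟩
      have hyx : 0 < y - x := by linarith
      have hmy : m y - m x ≤ (l + ε'') * (y - x) := by
        simp only [hm]
        linarith [(div_lt_iff₀ hyx).mp hs1]
      have hw_y : 0 < wf y := Real.exp_pos _
      have hb1 : wf y * (m y - m x) ≤ wf y * ((l + ε'')*(y-x)) :=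
        mul_le_mul_of_nonneg_left hmy hw_y.le
      have hb2 : (wf y - wf x) * m x = (wf y - wf x)/(y - x) * m x * (y - x) := by
        field_simp
      have hq' : (wf y * (l + ε'') + (wf y - wf x)/(y-x) * m x) * (y - x) ≤
          (2*(a - bb) * wf x * (Elam lam (y-x)/(y-x)) + ε) * (y - x) :=
        mul_le_mul_of_nonneg_right hq.le hyx.le
      have hfid : f y - f x = wf y * (m y - m x) + (wf y - wf x) * m x := by
        simp only [hf, hwf, hm]; ring
      have hBid : B y - B x = 2*(a - bb) * wf x * Elam lam (y - x) := by
        simp only [hB, hwf]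
        have hysplit : y - s = (x - s) + (y - x) := by ring
        rw [hysplit, Elam_add]
        ring
      have hcancel : 2*(a - bb) * wf x * (Elam lam (y-x)/(y-x)) * (y - x)
          = 2*(a - bb) * wf x * Elam lam (y - x) := by
        field_simp
      calc f y - f x = wf y * (m y - m x) + (wf y - wf x) * m x := hfid
        _ ≤ wf y * ((l + ε'')*(y-x)) + (wf y - wf x)/(y-x)*m x*(y-x) := by
            rw [← hb2]; linarith
        _ = (wf y * (l + ε'') + (wf y - wf x)/(y-x) * m x) * (y - x) := by ring
        _ ≤ (2*(a - bb) * wf x * (Elam lam (y-x)/(y-x)) + ε) * (y - x) := hq'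
        _ = 2*(a - bb) * wf x * (Elam lam (y-x)/(y-x)) * (y - x) + ε * (y - x) := by ring
        _ = 2*(a - bb) * wf x * Elam lam (y - x) + ε * (y - x) := by rw [hcancel]
        _ = B y - B x + ε * (y - x) := by rw [hBid]
  have hML' : Real.exp (lam * (t - s)) * m t - Real.exp (lam * (s - s)) * m s ≤
      2 * (a - bb) * Elam lam (t - s) - 2 * (a - bb) * Elam lam (s - s) := hML
  simp only [sub_self, mul_zero, Real.exp_zero, one_mul, Elam_zero, hm] at hML'
  linarith [hML']

lemma A_psi_locInt (hlsc : LowerSemicontinuous φ) (hcont : ContinuousOn u (Set.Ioi 0))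
    (hmono : ∀ ⦃p q : ℝ⦄, 0 < p → p ≤ q → (φ (u q)).toReal ≤ (φ (u p)).toReal) :
    LocallyIntegrableOn (fun r => (φ (u r)).toReal) (Set.Ioi 0) := by
  letI : MeasurableSpace X := borel X
  haveI : BorelSpace X := ⟨rfl⟩
  rw [MeasureTheory.locallyIntegrableOn_iff isOpen_Ioi.isLocallyClosed]
  intro k hk hkc
  rcases k.eq_empty_or_nonempty with rfl | hne
  · simp
  set a := sInf k with hadef
  set b := sSup k with hbdef
  have hak : a ∈ k := hkc.sInf_mem hne
  have hbk : b ∈ k := hkc.sSup_mem hne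
  have ha0 : 0 < a := hk hak
  have hsub : k ⊆ Set.Icc a b := fun x hx =>
    ⟨csInf_le hkc.bddBelow hx, le_csSup hkc.bddAbove hx⟩
  have hIcc : Set.Icc a b ⊆ Set.Ioi 0 := fun x hx => lt_of_lt_of_le ha0 hx.1
  apply MeasureTheory.IntegrableOn.mono_set _ hsub
  have hu : AEMeasurable u (volume.restrict (Set.Icc a b)) :=
    (hcont.mono hIcc).aemeasurable measurableSet_Icc
  have hmeas : AEMeasurable (fun r => (φ (u r)).toReal) (volume.restrict (Set.Icc a b)) := by
    have h1 : Measurable (fun y : X => (φ y).toReal) :=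
      measurable_ereal_toReal.comp hlsc.measurable
    exact h1.comp_aemeasurable hu
  apply MeasureTheory.Integrable.mono'
    (g := fun _ => |(φ (u a)).toReal| + |(φ (u b)).toReal|)
  · exact (MeasureTheory.integrableOn_const_iff).mpr (Or.inr measure_Icc_lt_top)
  · exact hmeas.aestronglyMeasurable
  · rw [MeasureTheory.ae_restrict_iff' measurableSet_Icc]
    apply Filter.Eventually.of_forall
    intro r hr
    have h1 : (φ (u r)).toReal ≤ (φ (u a)).toReal := hmono ha0 hr.1
    have h2 : (φ (u b)).toReal ≤ (φ (u r)).toReal :=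
      hmono (lt_of_lt_of_le ha0 hr.1) hr.2
    rw [Real.norm_eq_abs, abs_le]
    constructor
    · linarith [neg_abs_le ((φ (u b)).toReal), abs_nonneg ((φ (u a)).toReal)]
    · linarith [le_abs_self ((φ (u a)).toReal), abs_nonneg ((φ (u b)).toReal)]

lemma A_m_locInt (hcont : ContinuousOn u (Set.Ioi 0)) (v : X) :
    LocallyIntegrableOn (fun r => dist (u r) v ^ 2) (Set.Ioi 0) := by
  have h1 : ContinuousOn (fun r => dist (u r) v ^ 2) (Set.Ioi 0) := by
    apply ContinuousOn.pow
    exact (continuous_id.dist continuous_const).comp_continuousOn hcont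
  exact h1.locallyIntegrableOn measurableSet_Ioi

lemma A_to_B_ineq (hbot : ∀ y, φ y ≠ ⊥) (hlsc : LowerSemicontinuous φ)
    (hcont : ContinuousOn u (Set.Ioi 0)) (hne : ∀ t ∈ Set.Ioi (0:ℝ), φ (u t) ≠ ⊤)
    (hevi : ∀ t ∈ Set.Ioi (0:ℝ), EVIineq φ lam u t)
    (hmono : ∀ ⦃p q : ℝ⦄, 0 < p → p ≤ q → (φ (u q)).toReal ≤ (φ (u p)).toReal)
    {v : X} (hv : φ v ≠ ⊤) {s t : ℝ} (hs : 0 < s) (hst : s < t) :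
    1/2 * dist (u t) v ^ 2 - 1/2 * dist (u s) v ^ 2 +
      ∫ r in s..t, ((φ (u r)).toReal + lam / 2 * dist (u r) v ^ 2) ≤
      (t - s) * (φ v).toReal := by
  set a := (φ v).toReal with ha
  set m : ℝ → ℝ := fun r => dist (u r) v ^ 2 with hm
  set g : ℝ → ℝ := fun r => (φ (u r)).toReal + lam / 2 * m r with hg
  have hIccsub : Set.Icc s t ⊆ Set.Ioi 0 := fun x hx => lt_of_lt_of_le hs hx.1
  have hgInt : IntegrableOn g (Set.Icc s t) := by
    apply MeasureTheory.Integrable.add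
    · exact (A_psi_locInt hlsc hcont hmono).integrableOn_compact_subset hIccsub isCompact_Icc
    · exact ((A_m_locInt hcont v).integrableOn_compact_subset hIccsub isCompact_Icc).const_mul _
  have hgIntI : ∀ p q : ℝ, s ≤ p → p ≤ q → q ≤ t → IntervalIntegrable g volume p q := by
    intro p q hp hpq hq
    apply IntegrableOn.intervalIntegrable
    rw [Set.uIcc_of_le hpq]
    exact hgInt.mono_set (fun x hx => ⟨le_trans hp hx.1, le_trans hx.2 hq⟩)
  set B : ℝ → ℝ := fun r => a * r - ∫ ρ in s..r, g ρ with hB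
  have hML : (fun r => 1/2 * m r) t - (fun r => 1/2 * m r) s ≤ B t - B s := by
    apply ML hst.le
    · apply ContinuousOn.sub
      · exact (continuous_const.mul continuous_id).continuousOn
      · have hInt' : IntegrableOn g (Set.uIcc s t) := by
          rw [Set.uIcc_of_le hst.le]; exact hgInt
        have := intervalIntegral.continuousOn_primitive_interval hInt'
        rwa [Set.uIcc_of_le hst.le] at this
    · apply left_cont_hyp hs
      intro x hx0
      have hux : ContinuousAt u x := hcont.continuousAt (Ioi_mem_nhds hx0)
      exact continuousAt_const.mul ((hux.dist continuousAt_const).pow 2)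
    · intro x hx ε hε
      have hx0 : 0 < x := lt_of_lt_of_le hs hx.1
      have hDini := evi_extract (v := v) hv (hbot v) (hne x hx0) (hbot (u x)) (hevi x hx0)
      have hslope1 := eventually_slope_lt' hDini (show (0:ℝ) < ε/2 by linarith)
      set l := 2 * (a - (φ (u x)).toReal) - lam * dist (u x) v ^ 2 with hl
      have hux : ContinuousAt u x := hcont.continuousAt (Ioi_mem_nhds hx0)
      have hmx : ContinuousAt (fun r => lam/2 * m r) x :=
        continuousAt_const.mul ((hux.dist continuousAt_const).pow 2)
      have hev4 : ∀ᶠ ρ in nhds x, |lam/2 * m ρ - lam/2 * m x| < ε/4 := by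
        have h1 := hmx.tendsto
        rw [Metric.tendsto_nhds] at h1
        filter_upwards [h1 (ε/4) (by linarith)] with ρ hρ
        rwa [Real.dist_eq] at hρ
      rw [Metric.eventually_nhds_iff] at hev4
      obtain ⟨δ, hδ, hball⟩ := hev4
      have hev2 : ∀ᶠ y in nhdsWithin x (Set.Ioi x), y < t :=
        ((isOpen_Iio.eventually_mem hx.2).filter_mono nhdsWithin_le_nhds)
      have hev3 : ∀ᶠ y in nhdsWithin x (Set.Ioi x), x < y := by
        filter_upwards [self_mem_nhdsWithin] with y hy
        exact hy
      have hev5 : ∀ᶠ y in nhdsWithin x (Set.Ioi x), y < x + δ :=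
        ((isOpen_Iio.eventually_mem (show x ∈ Set.Iio (x+δ) by simp [hδ])).filter_mono
          nhdsWithin_le_nhds)
      apply ((hslope1.and (hev2.and (hev3.and hev5))).frequently).mono
      rintro y ⟨hs1, hyt, hxy, hyδ⟩
      refine ⟨hyt.le, ?_⟩
      have hyx : 0 < y - x := by linarith
      have hgxy : IntervalIntegrable g volume x y :=
        hgIntI x y hx.1 (le_of_lt hxy) hyt.le
      have hmono_int : ∫ ρ in x..y, g ρ ≤
          (y - x) * ((φ (u x)).toReal + lam/2 * m x + ε/4) := by
        have hconst : IntervalIntegrable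
            (fun _ : ℝ => (φ (u x)).toReal + lam/2 * m x + ε/4) volume x y :=
          _root_.intervalIntegrable_const
        have hbound : ∀ ρ ∈ Set.Icc x y, g ρ ≤ (φ (u x)).toReal + lam/2 * m x + ε/4 := by
          intro ρ hρ
          have h1 : (φ (u ρ)).toReal ≤ (φ (u x)).toReal := hmono hx0 hρ.1
          have h2 : |lam/2 * m ρ - lam/2 * m x| < ε/4 := by
            apply hball
            rw [Real.dist_eq, abs_lt]
            constructor <;> [linarith [hρ.1]; linarith [hρ.2]]
          have h3 := abs_lt.mp h2
          rw [hg]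
          simp only
          linarith [h3.1, h3.2]
        have hle := intervalIntegral.integral_mono_on (le_of_lt hxy) hgxy hconst hbound
        rw [intervalIntegral.integral_const] at hle
        rw [smul_eq_mul] at hle
        linarith
      have hmy : m y - m x ≤ (l + ε/2) * (y - x) := by
        simp only [hm]
        linarith [(div_lt_iff₀ hyx).mp hs1]
      have hBinc : B y - B x = a * (y - x) - ∫ ρ in x..y, g ρ := by
        simp only [hB]
        have hadj := intervalIntegral.integral_add_adjacent_intervals
          (hgIntI s x (le_refl s) hx.1 (le_trans hx.2.le (le_refl t))) hgxy
        have hsplit : ∫ ρ in s..y, g ρ = (∫ ρ in s..x, g ρ) + ∫ ρ in x..y, g ρ := hadj.symm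
        rw [hsplit]; ring
      rw [hBinc]
      have e1 : (l + ε/2) * (y - x) / 2
          = (a - (φ (u x)).toReal - lam/2 * m x + ε/4) * (y - x) := by
        simp only [hl, hm]; ring
      have key : (a - (φ (u x)).toReal - lam/2 * m x + ε/4) * (y - x) ≤
          a * (y - x) - (y - x) * ((φ (u x)).toReal + lam/2 * m x + ε/4) + ε * (y - x) := by
        nlinarith [hyx.le, hε.le]
      calc (fun r => 1/2 * m r) y - (fun r => 1/2 * m r) x
          = 1/2 * m y - 1/2 * m x := rfl
        _ ≤ a * (y - x) - (∫ ρ in x..y, g ρ) + ε * (y - x) := by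
            linarith [hmy, e1, key, hmono_int]
  have h0 : (∫ ρ in s..s, g ρ) = 0 := intervalIntegral.integral_same
  have hML' : 1/2 * m t - 1/2 * m s ≤
      (a * t - ∫ ρ in s..t, g ρ) - (a * s - ∫ ρ in s..s, g ρ) := hML
  rw [h0] at hML'
  simp only [hm] at hML'
  linarith

end Aside


lemma tendsto_shift (t₀ : ℝ) :
    Tendsto (fun h : ℝ => t₀ + h) (nhdsWithin 0 (Set.Ioi 0)) (nhds t₀) := by
  have h1 : Tendsto (fun h : ℝ => t₀ + h) (nhds 0) (nhds (t₀ + 0)) :=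
    (continuous_const.add continuous_id).tendsto 0
  rw [add_zero] at h1
  exact h1.mono_left nhdsWithin_le_nhds

section Shared

variable {X : Type*} [MetricSpace X] {φ : X → EReal} {lam : ℝ} {u : ℝ → X}

/-- If `u` is continuous at `t₀`, `φ∘u` is monotone and lsc, then `ψ(t₀+h) → ψ(t₀)` as `h → 0⁺`. -/
lemma psi_tendsto_of_contAt (hbot : ∀ y, φ y ≠ ⊥) (hlsc : LowerSemicontinuous φ)
    (hne : ∀ t ∈ Set.Ioi (0:ℝ), φ (u t) ≠ ⊤)
    (hmono : ∀ ⦃p q : ℝ⦄, 0 < p → p ≤ q → (φ (u q)).toReal ≤ (φ (u p)).toReal)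
    {t₀ : ℝ} (ht₀ : 0 < t₀) (hca : ContinuousAt u t₀) :
    Tendsto (fun h => (φ (u (t₀+h))).toReal) (nhdsWithin 0 (Set.Ioi 0))
      (nhds ((φ (u t₀)).toReal)) := by
  rw [Metric.tendsto_nhds]
  intro ε hε
  have hub : ∀ᶠ h in nhdsWithin 0 (Set.Ioi 0),
      (φ (u (t₀+h))).toReal ≤ (φ (u t₀)).toReal := by
    filter_upwards [self_mem_nhdsWithin] with h hh
    exact hmono ht₀ (by linarith [mem_Ioi.mp hh])
  have hne0 : φ (u t₀) ≠ ⊤ := hne t₀ ht₀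
  have hcoe : φ (u t₀) = (((φ (u t₀)).toReal : ℝ) : EReal) :=
    (EReal.coe_toReal hne0 (hbot _)).symm
  have hlt : (((φ (u t₀)).toReal - ε : ℝ) : EReal) < φ (u t₀) := by
    conv_rhs => rw [hcoe]
    rw [EReal.coe_lt_coe_iff]
    linarith
  have hev := hlsc (u t₀) _ hlt
  have hucomp : Tendsto (fun h => u (t₀ + h)) (nhdsWithin 0 (Set.Ioi 0)) (nhds (u t₀)) :=
    hca.tendsto.comp (tendsto_shift t₀)
  have hev2 := hucomp.eventually hev
  filter_upwards [hub, hev2, self_mem_nhdsWithin] with h h1 h2 h3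
  have hh0 : (0:ℝ) < h := h3
  have hnet : φ (u (t₀+h)) ≠ ⊤ := hne _ (by simp only [mem_Ioi]; linarith)
  have hlb : ((φ (u t₀)).toReal - ε : ℝ) < (φ (u (t₀+h))).toReal := by
    rw [show φ (u (t₀+h)) = (((φ (u (t₀+h))).toReal : ℝ) : EReal) from
      (EReal.coe_toReal hnet (hbot _)).symm] at h2
    exact EReal.coe_lt_coe_iff.mp h2
  rw [Real.dist_eq, abs_lt]
  constructor <;> linarith

lemma C_to_EVI (hbot : ∀ y, φ y ≠ ⊥) (hproper : ∃ y, φ y ≠ ⊤)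
    (hlsc : LowerSemicontinuous φ)
    (hC : ∀ s t : ℝ, 0 < s → s < t → ∀ v : X, φ v ≠ ⊤ →
      ((Real.exp (lam * (t - s)) / 2 * dist (u t) v ^ 2
          - 1 / 2 * dist (u s) v ^ 2 : ℝ) : EReal) ≤
        ((Elam lam (t - s) : ℝ) : EReal) * (φ v - φ (u t)))
    {t₀ : ℝ} (ht₀ : 0 < t₀) : EVIineq φ lam u t₀ := by
  intro v hv
  apply evi_make_pt hv (hbot v) (C_ne_top hbot hproper hC ht₀) (hbot _)
  set a := (φ v).toReal with ha
  have hu_t : Tendsto (fun h => u (t₀+h)) (nhdsWithin 0 (Set.Ioi 0)) (nhds (u t₀)) :=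
    (C_contAt hbot hproper hC ht₀).tendsto.comp (tendsto_shift t₀)
  have T4 : Tendsto (fun h => dist (u (t₀+h)) v ^ 2) (nhdsWithin 0 (Set.Ioi 0))
      (nhds (dist (u t₀) v ^ 2)) := by
    have hc : Continuous (fun x : X => dist x v ^ 2) :=
      (continuous_id.dist continuous_const).pow 2
    exact (hc.tendsto (u t₀)).comp hu_t
  have T2 : Tendsto (fun h => a - (φ (u (t₀+h))).toReal) (nhdsWithin 0 (Set.Ioi 0))
      (nhds (a - (φ (u t₀)).toReal)) :=
    tendsto_const_nhds.sub (psi_tendsto_of_contAt hbot hlsc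
      (fun r hr => C_ne_top hbot hproper hC hr)
      (fun p q hp hpq => C_mono hbot hproper hC hp hpq) ht₀
      (C_contAt hbot hproper hC ht₀))
  have T1 := tendsto_Elam_div lam
  have T3 := tendsto_exp_slope lam
  have hR : Tendsto (fun h => 2 * (Elam lam h / h * (a - (φ (u (t₀+h))).toReal))
        + (1 - Real.exp (lam * h))/h * dist (u (t₀+h)) v ^ 2) (nhdsWithin 0 (Set.Ioi 0))
      (nhds (2 * (1 * (a - (φ (u t₀)).toReal)) + (-lam) * dist (u t₀) v ^ 2)) :=
    ((T1.mul T2).const_mul 2).add (T3.mul T4)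
  have hval : 2 * (1 * (a - (φ (u t₀)).toReal)) + (-lam) * dist (u t₀) v ^ 2
      = 2 * (a - (φ (u t₀)).toReal) - lam * dist (u t₀) v ^ 2 := by ring
  rw [hval] at hR
  apply dini_le_of_eventually _ hR
  filter_upwards [self_mem_nhdsWithin] with h hh
  have hh0 : (0:ℝ) < h := hh
  have hc := C_real hbot hC ht₀ (by linarith : t₀ < t₀ + h) hv
    (C_ne_top hbot hproper hC (by linarith))
  have hsimp : t₀ + h - t₀ = h := by ring
  rw [hsimp] at hc
  show (dist (u (t₀+h)) v ^ 2 - dist (u t₀) v ^ 2)/h ≤ _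
  have key : (dist (u (t₀+h)) v ^ 2 - dist (u t₀) v ^ 2)/h
      = 2*(Real.exp (lam*h)/2 * dist (u (t₀+h)) v ^2 - 1/2 * dist (u t₀) v ^2)/h
        + (1 - Real.exp (lam*h))/h * dist (u (t₀+h)) v ^2 := by
    field_simp
    ring
  rw [key]
  have h1 : 2*(Real.exp (lam*h)/2 * dist (u (t₀+h)) v ^2 - 1/2 * dist (u t₀) v ^2)/h
      ≤ 2*(Elam lam h * (a - (φ (u (t₀+h))).toReal))/h := by
    apply (div_le_div_iff_of_pos_right hh0).mpr
    linarith [hc]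
  have h2eq : 2*(Elam lam h * (a - (φ (u (t₀+h))).toReal))/h
      = 2 * (Elam lam h / h * (a - (φ (u (t₀+h))).toReal)) := by
    field_simp
  linarith [h1, h2eq]

/-- Local integrability on `(0,∞)` gives interval integrability of positive intervals. -/
lemma locInt_intervalIntegrable {f : ℝ → ℝ}
    (hloc : LocallyIntegrableOn f (Set.Ioi 0) volume) {p q : ℝ} (hp : 0 < p) (hpq : p ≤ q) :
    IntervalIntegrable f volume p q := by
  apply IntegrableOn.intervalIntegrable
  rw [Set.uIcc_of_le hpq]
  exact hloc.integrableOn_compact_subset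
    (fun x hx => lt_of_lt_of_le hp hx.1) isCompact_Icc

/-- The half trick: subsolution of `h ≤ 2ε + |λ|∫h` on a short interval is bounded. -/
lemma halfTrick {lam : ℝ} {h : ℝ → ℝ} {x₀ T ebar : ℝ} (hxT : x₀ < T)
    (hwidth : T - x₀ ≤ 1/(2*(|lam|+1)))
    (hh0 : ∀ r ∈ Set.Icc x₀ T, 0 ≤ h r)
    (hint : IntervalIntegrable h volume x₀ T)
    (hkey : ∀ r ∈ Set.Ioc x₀ T, 1/2 * h r ≤ ebar + |lam|/2 * ∫ ρ in x₀..r, h ρ)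
    (hebar : 0 ≤ ebar) :
    (∫ ρ in x₀..T, h ρ) ≤ 4*ebar*(T - x₀) ∧ ∀ r ∈ Set.Ioc x₀ T, h r ≤ 4*ebar := by
  have hintr : ∀ r ∈ Set.Icc x₀ T, IntervalIntegrable h volume x₀ r := by
    intro r hr
    exact hint.mono_set (by rw [Set.uIcc_of_le hr.1, Set.uIcc_of_le (hr.1.trans hr.2)]
                            exact Set.Icc_subset_Icc le_rfl hr.2)
  have hH : ∀ r ∈ Set.Icc x₀ T, (∫ ρ in x₀..r, h ρ) ≤ ∫ ρ in x₀..T, h ρ := by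
    intro r hr
    have hsplit := intervalIntegral.integral_add_adjacent_intervals (hintr r hr)
      (hint.mono_set (by rw [Set.uIcc_of_le hr.2, Set.uIcc_of_le (hr.1.trans hr.2)]
                         exact Set.Icc_subset_Icc hr.1 le_rfl))
    have hpos : 0 ≤ ∫ ρ in r..T, h ρ :=
      intervalIntegral.integral_nonneg hr.2 (fun ρ hρ => hh0 ρ ⟨hr.1.trans hρ.1, hρ.2⟩)
    linarith [hsplit]
  set HT := ∫ ρ in x₀..T, h ρ with hHT
  have hHT0 : 0 ≤ HT :=
    intervalIntegral.integral_nonneg hxT.le (fun ρ hρ => hh0 ρ hρ)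
  have hstep : ∀ r ∈ Set.Ioc x₀ T, h r ≤ 2*ebar + |lam| * HT := by
    intro r hr
    have h1 := hkey r hr
    have h2 := hH r ⟨hr.1.le, hr.2⟩
    have h3 : |lam|/2 * (∫ ρ in x₀..r, h ρ) ≤ |lam|/2 * HT :=
      mul_le_mul_of_nonneg_left h2 (by positivity)
    linarith
  have hHbound : HT ≤ (T - x₀) * (2*ebar + |lam| * HT) := by
    have h1 : (∫ ρ in x₀..T, h ρ) = ∫ ρ in Set.Ioc x₀ T, h ρ :=
      intervalIntegral.integral_of_le hxT.le
    have h2 : (∫ ρ in Set.Ioc x₀ T, h ρ) ≤ ∫ _ in Set.Ioc x₀ T, (2*ebar + |lam| * HT) := by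
      apply MeasureTheory.setIntegral_mono_on
      · have h0 := intervalIntegrable_iff.mp hint
        rwa [Set.uIoc_of_le hxT.le] at h0
      · exact (MeasureTheory.integrableOn_const_iff).mpr
          (Or.inr ((measure_Ioc_lt_top)))
      · exact measurableSet_Ioc
      · exact hstep
    have h3 : (∫ _ in Set.Ioc x₀ T, (2*ebar + |lam| * HT)) =
        (T - x₀) * (2*ebar + |lam| * HT) := by
      rw [MeasureTheory.setIntegral_const, smul_eq_mul]
      congr 1
      rw [Real.volume_real_Ioc_of_le (by linarith)]
    calc HT = ∫ ρ in Set.Ioc x₀ T, h ρ := h1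
      _ ≤ ∫ _ in Set.Ioc x₀ T, (2*ebar + |lam| * HT) := h2
      _ = (T - x₀) * (2*ebar + |lam| * HT) := h3
  have hw : |lam| * (T - x₀) ≤ 1/2 := by
    have h1 : |lam| * (T - x₀) ≤ |lam| * (1/(2*(|lam|+1))) :=
      mul_le_mul_of_nonneg_left hwidth (abs_nonneg lam)
    have h2 : |lam| * (1/(2*(|lam|+1))) ≤ 1/2 := by
      rw [mul_one_div, div_le_iff₀ (by positivity : (0:ℝ) < 2*(|lam|+1))]
      linarith [abs_nonneg lam]
    linarith
  have hHT' : HT ≤ 4*ebar*(T - x₀) := by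
    nlinarith [hHbound, hw, hHT0, mul_le_mul_of_nonneg_right hw hHT0]
  refine ⟨hHT', ?_⟩
  intro r hr
  have h1 := hstep r hr
  have h2 : |lam| * HT ≤ |lam| * (4*ebar*(T-x₀)) :=
    mul_le_mul_of_nonneg_left hHT' (abs_nonneg lam)
  have h3 : |lam| * (4*ebar*(T-x₀)) ≤ 2*ebar := by
    nlinarith [hw, hebar, abs_nonneg lam, sub_nonneg.mpr hxT.le]
  linarith

/-- averages of a locally integrable, continuous-at-`t₀` function tend to the value. -/
lemma avg_tendsto {m : ℝ → ℝ} {t₀ : ℝ}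
    (hloc : LocallyIntegrableOn m (Set.Ioi 0) volume) (ht₀ : 0 < t₀)
    (hca : ContinuousAt m t₀) :
    Tendsto (fun h => (∫ ρ in t₀..(t₀+h), m ρ)/h) (nhdsWithin 0 (Set.Ioi 0))
      (nhds (m t₀)) := by
  rw [Metric.tendsto_nhds]
  intro ε hε
  have hc := hca.tendsto
  rw [Metric.tendsto_nhds] at hc
  have h2 := hc (ε/2) (by linarith)
  rw [Metric.eventually_nhds_iff] at h2
  obtain ⟨δ, hδ, hball⟩ := h2
  have hev : ∀ᶠ h in nhdsWithin 0 (Set.Ioi 0), h < δ :=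
    ((isOpen_Iio.eventually_mem (show (0:ℝ) ∈ Set.Iio δ by simpa using hδ)).filter_mono
      nhdsWithin_le_nhds)
  filter_upwards [hev, self_mem_nhdsWithin] with h h1 h3
  have hh0 : (0:ℝ) < h := h3
  have hint : IntervalIntegrable m volume t₀ (t₀+h) :=
    locInt_intervalIntegrable hloc ht₀ (by linarith)
  have hbound : ∀ ρ ∈ Set.Icc t₀ (t₀+h), |m ρ - m t₀| ≤ ε/2 := by
    intro ρ hρ
    have : dist ρ t₀ < δ := by
      rw [Real.dist_eq, abs_lt]; constructor <;> [linarith [hρ.1]; linarith [hρ.2]]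
    have := hball this
    rw [Real.dist_eq] at this
    linarith [le_of_lt this]
  have hup : (∫ ρ in t₀..(t₀+h), m ρ) ≤ h * (m t₀ + ε/2) := by
    have hb : ∀ ρ ∈ Set.Icc t₀ (t₀+h), m ρ ≤ m t₀ + ε/2 := by
      intro ρ hρ
      linarith [(abs_le.mp (hbound ρ hρ)).2]
    have h4 := intervalIntegral.integral_mono_on (by linarith : t₀ ≤ t₀+h) hint
      _root_.intervalIntegrable_const hb
    rw [intervalIntegral.integral_const, smul_eq_mul] at h4
    have hid : t₀ + h - t₀ = h := by ring
    rw [hid] at h4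
    linarith
  have hlo : h * (m t₀ - ε/2) ≤ ∫ ρ in t₀..(t₀+h), m ρ := by
    have hb : ∀ ρ ∈ Set.Icc t₀ (t₀+h), m t₀ - ε/2 ≤ m ρ := by
      intro ρ hρ
      linarith [(abs_le.mp (hbound ρ hρ)).1]
    have h4 := intervalIntegral.integral_mono_on (by linarith : t₀ ≤ t₀+h)
      _root_.intervalIntegrable_const hint hb
    rw [intervalIntegral.integral_const, smul_eq_mul] at h4
    have hid : t₀ + h - t₀ = h := by ring
    rw [hid] at h4
    linarith
  rw [Real.dist_eq, abs_lt]
  constructor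
  · have h5 : m t₀ - ε/2 ≤ (∫ ρ in t₀..(t₀+h), m ρ)/h := by
      rw [le_div_iff₀ hh0, mul_comm]
      linarith
    linarith
  · have h5 : (∫ ρ in t₀..(t₀+h), m ρ)/h ≤ m t₀ + ε/2 := by
      rw [div_le_iff₀ hh0, mul_comm]
      linarith
    linarith

end Shared


section Bside

variable {X : Type*} [MetricSpace X] {φ : X → EReal} {lam : ℝ} {u : ℝ → X}

lemma B_pair (hψloc : LocallyIntegrableOn (fun r => (φ (u r)).toReal) (Set.Ioi 0) volume)
    {v : X} (hm : LocallyIntegrableOn (fun r => dist (u r) v ^ 2) (Set.Ioi 0) volume)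
    (hineq : ∀ s t : ℝ, 0 < s → s < t →
      1/2 * dist (u t) v ^2 - 1/2 * dist (u s) v ^2 +
        ∫ r in s..t, ((φ (u r)).toReal + lam/2 * dist (u r) v ^2) ≤
        (t - s) * (φ v).toReal)
    {p q : ℝ} (hp : 0 < p) (hpq : p < q) :
    1/2 * dist (u q) v ^2 - 1/2 * dist (u p) v ^2 + (∫ r in p..q, (φ (u r)).toReal)
      + lam/2 * ∫ r in p..q, dist (u r) v ^2 ≤ (q - p) * (φ v).toReal := by
  have h := hineq p q hp hpq
  have h1 : IntervalIntegrable (fun r => (φ (u r)).toReal) volume p q :=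
    locInt_intervalIntegrable hψloc hp hpq.le
  have h2 : IntervalIntegrable (fun r => dist (u r) v ^ 2) volume p q :=
    locInt_intervalIntegrable hm hp hpq.le
  have hsplit : ∫ r in p..q, ((φ (u r)).toReal + lam/2 * dist (u r) v ^2)
      = (∫ r in p..q, (φ (u r)).toReal) + lam/2 * ∫ r in p..q, dist (u r) v ^2 := by
    rw [intervalIntegral.integral_add h1 (h2.const_mul _), intervalIntegral.integral_const_mul]
  linarith [h, hsplit]

/-- basic estimate with base point `p` : `½ d(u r, u p)² ≤ ∫ (ψ p - ψ) + |λ|/2 ∫ d²`. -/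
lemma B_basic (hψloc : LocallyIntegrableOn (fun r => (φ (u r)).toReal) (Set.Ioi 0) volume)
    (hB3 : ∀ v : X, φ v ≠ ⊤ →
      LocallyIntegrableOn (fun r => dist (u r) v ^ 2) (Set.Ioi 0) volume ∧
      ∀ s t : ℝ, 0 < s → s < t →
        1/2 * dist (u t) v ^2 - 1/2 * dist (u s) v ^2 +
          ∫ r in s..t, ((φ (u r)).toReal + lam/2 * dist (u r) v ^2) ≤
          (t - s) * (φ v).toReal)
    {p : ℝ} (hp : 0 < p) (hptop : φ (u p) ≠ ⊤) {r : ℝ} (hpr : p < r) :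
    1/2 * dist (u r) (u p) ^ 2 ≤
      (∫ ρ in p..r, ((φ (u p)).toReal - (φ (u ρ)).toReal))
        + |lam|/2 * ∫ ρ in p..r, dist (u ρ) (u p) ^ 2 := by
  obtain ⟨hmloc, hineq⟩ := hB3 (u p) hptop
  have hpair := B_pair hψloc hmloc hineq hp hpr
  rw [dist_self] at hpair
  have hψI : IntervalIntegrable (fun ρ => (φ (u ρ)).toReal) volume p r :=
    locInt_intervalIntegrable hψloc hp hpr.le
  have hsub : ∫ ρ in p..r, ((φ (u p)).toReal - (φ (u ρ)).toReal)
      = (r - p) * (φ (u p)).toReal - ∫ ρ in p..r, (φ (u ρ)).toReal := by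
    rw [intervalIntegral.integral_sub _root_.intervalIntegrable_const hψI,
      intervalIntegral.integral_const, smul_eq_mul]
  have hmn : 0 ≤ ∫ ρ in p..r, dist (u ρ) (u p) ^ 2 :=
    intervalIntegral.integral_nonneg hpr.le (fun ρ _ => by positivity)
  have habs : -(lam/2) * (∫ ρ in p..r, dist (u ρ) (u p) ^ 2) ≤
      |lam|/2 * ∫ ρ in p..r, dist (u ρ) (u p) ^ 2 := by
    apply mul_le_mul_of_nonneg_right _ hmn
    have := neg_abs_le lam
    linarith [neg_abs_le lam]
  have hz : (1:ℝ)/2 * (0:ℝ)^2 = 0 := by norm_num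
  linarith [hpair, hsub, habs, hz]

lemma B_mono (hbot : ∀ y, φ y ≠ ⊥) (hlsc : LowerSemicontinuous φ)
    (hne : ∀ t ∈ Set.Ioi (0:ℝ), φ (u t) ≠ ⊤)
    (hψloc : LocallyIntegrableOn (fun r => (φ (u r)).toReal) (Set.Ioi 0) volume)
    (hB3 : ∀ v : X, φ v ≠ ⊤ →
      LocallyIntegrableOn (fun r => dist (u r) v ^ 2) (Set.Ioi 0) volume ∧
      ∀ s t : ℝ, 0 < s → s < t →
        1/2 * dist (u t) v ^2 - 1/2 * dist (u s) v ^2 +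
          ∫ r in s..t, ((φ (u r)).toReal + lam/2 * dist (u r) v ^2) ≤
          (t - s) * (φ v).toReal)
    {s t : ℝ} (hs : 0 < s) (hst : s ≤ t) :
    (φ (u t)).toReal ≤ (φ (u s)).toReal := by
  rcases eq_or_lt_of_le hst with heq | hst'
  · rw [heq]
  by_contra hcon
  push_neg at hcon
  set S := {r | r ∈ Set.Icc s t ∧ (φ (u r)).toReal ≤ (φ (u s)).toReal} with hS
  have hsS : s ∈ S := ⟨⟨le_refl s, hst'.le⟩, le_refl _⟩
  have hbdd : BddAbove S := ⟨t, fun r hr => hr.1.2⟩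
  set c := sSup S with hc
  have hsc : s ≤ c := le_csSup hbdd hsS
  have hct : c ≤ t := csSup_le ⟨s, hsS⟩ (fun r hr => hr.1.2)
  have hc0 : 0 < c := lt_of_lt_of_le hs hsc
  have hgt : ∀ r, c < r → r ≤ t → (φ (u s)).toReal < (φ (u r)).toReal := by
    intro r h1 h2
    by_contra hle
    push_neg at hle
    have hmem : r ∈ S := ⟨⟨le_trans hsc h1.le, h2⟩, hle⟩
    exact absurd (le_csSup hbdd hmem) (not_le.mpr h1)
  -- absolute-difference integrand and its primitive
  set W : ℝ → ℝ := fun ρ => |(φ (u s)).toReal - (φ (u ρ)).toReal| with hW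
  have hWI : ∀ p q : ℝ, 0 < p → p ≤ q → IntervalIntegrable W volume p q := by
    intro p q hp hpq
    exact ((_root_.intervalIntegrable_const).sub (locInt_intervalIntegrable hψloc hp hpq)).abs
  set Pr : ℝ → ℝ := fun x => ∫ ρ in s..x, W ρ with hPr
  have hPrCont : ContinuousOn Pr (Set.Icc s t) := by
    have h1 := intervalIntegral.continuousOn_primitive_interval'
      (hWI s t hs hst) (by rw [Set.uIcc_of_le hst]; exact ⟨le_refl s, hst⟩)
    rwa [Set.uIcc_of_le hst] at h1
  have hPrsplit : ∀ p q : ℝ, s ≤ p → p ≤ q → q ≤ t →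
      (∫ ρ in p..q, W ρ) = Pr q - Pr p := by
    intro p q hp hpq hq
    have hadj := intervalIntegral.integral_add_adjacent_intervals
      (hWI s p hs hp) (hWI p q (lt_of_lt_of_le hs hp) hpq)
    simp only [hPr]
    linarith [hadj]
  have hWnonneg : ∀ p q : ℝ, 0 < p → p ≤ q → 0 ≤ ∫ ρ in p..q, W ρ := by
    intro p q hp hpq
    exact intervalIntegral.integral_nonneg hpq (fun ρ _ => abs_nonneg _)
  -- uniform bound: base estimate integrand bounded by W
  have hWb : ∀ p r : ℝ, 0 < p → s ≤ p → p ≤ r → (φ (u p)).toReal ≤ (φ (u s)).toReal →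
      (∫ ρ in p..r, ((φ (u p)).toReal - (φ (u ρ)).toReal)) ≤ ∫ ρ in p..r, W ρ := by
    intro p r hp hsp hpr hψp
    apply intervalIntegral.integral_mono_on hpr
      ((_root_.intervalIntegrable_const).sub (locInt_intervalIntegrable hψloc hp hpr))
      (hWI p r hp hpr)
    intro ρ _
    simp only [hW]
    have := le_abs_self ((φ (u s)).toReal - (φ (u ρ)).toReal)
    linarith
  rcases lt_or_eq_of_le hct with hct' | hceq
  · -- case c < t
    set δ0 : ℝ := 1/(4*(|lam|+1)) with hδ0
    have hδ0p : 0 < δ0 := by positivity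
    set t₁ := min t (c + δ0) with ht₁
    have hct₁ : c < t₁ := lt_min hct' (by linarith)
    have ht₁t : t₁ ≤ t := min_le_left _ _
    have hwidth1 : t₁ - c ≤ δ0 := by
      have := min_le_right t (c + δ0)
      linarith [this]
    set D := ∫ ρ in c..t₁, ((φ (u ρ)).toReal - (φ (u s)).toReal) with hD
    have hDpos : 0 < D := by
      apply intervalIntegral.intervalIntegral_pos_of_pos_on
      · exact (locInt_intervalIntegrable hψloc hc0 hct₁.le).sub _root_.intervalIntegrable_const
      · intro x hx
        have := hgt x hx.1 (hx.2.le.trans ht₁t)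
        linarith
      · exact hct₁
    have hWD : (∫ ρ in c..t₁, W ρ) = D := by
      apply intervalIntegral.integral_congr_ae
      apply Filter.Eventually.of_forall
      intro x hx
      rw [Set.uIoc_of_le hct₁.le] at hx
      have := hgt x hx.1 (hx.2.trans ht₁t)
      simp only [hW]
      rw [abs_of_neg (by linarith)]
      ring
    set θ : ℝ := 1/(|lam|+1) with hθ
    have hθp : 0 < θ := by positivity
    have hθ1 : θ ≤ 1 := by
      rw [hθ, div_le_one (by positivity)]
      linarith [abs_nonneg lam]
    set η := θ * D / 4 with hη
    have hηp : 0 < η := by positivity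
    -- choose r'
    have hPc := (hPrCont c ⟨hsc, hct⟩).tendsto
    rw [Metric.tendsto_nhds] at hPc
    obtain ⟨δ, hδ, hballP⟩ := Metric.mem_nhdsWithin_iff.mp (hPc η hηp)
    have hlt2 : c - min δ δ0 < c := by
      have := lt_min hδ hδ0p
      linarith
    obtain ⟨r', hr'S, hr'gt⟩ := exists_lt_of_lt_csSup ⟨s, hsS⟩ hlt2
    have hr'c : r' ≤ c := le_csSup hbdd hr'S
    have hr's : s ≤ r' := hr'S.1.1
    have hr'0 : 0 < r' := lt_of_lt_of_le hs hr's
    have hψr' : (φ (u r')).toReal ≤ (φ (u s)).toReal := hr'S.2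
    have hQδ : dist r' c < δ := by
      rw [Real.dist_eq, abs_lt]
      constructor
      · have := min_le_left δ δ0; linarith
      · linarith [hδ]
    have hQsmall : Pr c - Pr r' < η := by
      have hmem : r' ∈ Metric.ball c δ ∩ Set.Icc s t :=
        ⟨by rwa [Metric.mem_ball], ⟨hr's, hr'c.trans hct⟩⟩
      have h9 : dist (Pr r') (Pr c) < η := hballP hmem
      rw [Real.dist_eq, abs_lt] at h9
      linarith [h9.1]
    set Q := ∫ ρ in r'..c, W ρ with hQ
    have hQPr : Q = Pr c - Pr r' := hPrsplit r' c hr's hr'c hct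
    have hQ0 : 0 ≤ Q := hWnonneg r' c hr'0 hr'c
    have hQη : Q < η := by rw [hQPr]; exact hQsmall
    have hwidtot : t₁ - r' ≤ 1/(2*(|lam|+1)) := by
      have h1 : c - r' ≤ δ0 := by
        have := min_le_right δ δ0; linarith
      have h2 : t₁ - r' ≤ 2 * δ0 := by linarith
      have h3 : 2 * δ0 = 1/(2*(|lam|+1)) := by
        rw [hδ0]
        have hne' : |lam| + (1:ℝ) ≠ 0 := by positivity
        field_simp
        ring
      linarith
    -- the quantitative function
    have hr't₁ : r' < t₁ := lt_of_le_of_lt hr'c hct₁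
    obtain ⟨hmloc', _⟩ := hB3 (u r') (hne r' hr'0)
    have hh'int : IntervalIntegrable (fun ρ => dist (u ρ) (u r') ^ 2) volume r' t₁ :=
      locInt_intervalIntegrable hmloc' hr'0 hr't₁.le
    have hkey : ∀ r ∈ Set.Ioc r' t₁, 1/2 * dist (u r) (u r') ^ 2 ≤
        (Q + D) + |lam|/2 * ∫ ρ in r'..r, dist (u ρ) (u r') ^ 2 := by
      intro r hr
      have h1 := B_basic hψloc hB3 hr'0 (hne r' hr'0) hr.1
      have h2 := hWb r' r hr'0 hr's hr.1.le hψr'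
      have h3 : (∫ ρ in r'..r, W ρ) ≤ ∫ ρ in r'..t₁, W ρ := by
        have hadj := intervalIntegral.integral_add_adjacent_intervals
          (hWI r' r hr'0 hr.1.le) (hWI r t₁ (lt_of_lt_of_le hr'0 hr.1.le) hr.2)
        have hpos := hWnonneg r t₁ (lt_of_lt_of_le hr'0 hr.1.le) hr.2
        linarith
      have h4 : (∫ ρ in r'..t₁, W ρ) = Q + D := by
        have hadj := intervalIntegral.integral_add_adjacent_intervals
          (hWI r' c hr'0 hr'c) (hWI c t₁ hc0 hct₁.le)
        rw [hWD] at hadj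
        simp only [hQ] at *
        linarith
      linarith
    have hHT := halfTrick (lam := lam) hr't₁ hwidtot
      (fun ρ _ => by positivity) hh'int hkey (by linarith)
    -- refined estimate at t₁
    have hfin1 := B_basic hψloc hB3 hr'0 (hne r' hr'0) hr't₁
    have hsplit2 : ∫ ρ in r'..t₁, ((φ (u r')).toReal - (φ (u ρ)).toReal) ≤ Q - D := by
      have hψI1 : IntervalIntegrable
          (fun ρ => (φ (u r')).toReal - (φ (u ρ)).toReal) volume r' c :=
        (_root_.intervalIntegrable_const).sub (locInt_intervalIntegrable hψloc hr'0 hr'c)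
      have hψI2 : IntervalIntegrable
          (fun ρ => (φ (u r')).toReal - (φ (u ρ)).toReal) volume c t₁ :=
        (_root_.intervalIntegrable_const).sub (locInt_intervalIntegrable hψloc hc0 hct₁.le)
      have hadj := intervalIntegral.integral_add_adjacent_intervals hψI1 hψI2
      have hpart1 : (∫ ρ in r'..c, ((φ (u r')).toReal - (φ (u ρ)).toReal)) ≤ Q :=
        hWb r' c hr'0 hr's hr'c hψr'
      have hpart2 : (∫ ρ in c..t₁, ((φ (u r')).toReal - (φ (u ρ)).toReal)) ≤ -D := by
        have hmono2 : ∀ ρ ∈ Set.Icc c t₁,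
            (φ (u r')).toReal - (φ (u ρ)).toReal ≤ (φ (u s)).toReal - (φ (u ρ)).toReal := by
          intro ρ _
          linarith
        have h5 := intervalIntegral.integral_mono_on hct₁.le hψI2
          ((_root_.intervalIntegrable_const).sub (locInt_intervalIntegrable hψloc hc0 hct₁.le))
          hmono2
        have h6 : ∫ ρ in c..t₁, ((φ (u s)).toReal - (φ (u ρ)).toReal) = -D := by
          rw [hD, ← intervalIntegral.integral_neg]
          apply intervalIntegral.integral_congr
          intro x _
          ring
        linarith
      linarith
    have hlamw : 2 * |lam| * (t₁ - r') ≤ 1 - θ := by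
      have h1 : 2 * |lam| * (t₁ - r') ≤ 2 * |lam| * (1/(2*(|lam|+1))) := by
        apply mul_le_mul_of_nonneg_left hwidtot (by positivity)
      have h2 : 2 * |lam| * (1/(2*(|lam|+1))) = 1 - θ := by
        rw [hθ]
        field_simp
        ring
      linarith
    have hH4 : |lam|/2 * (∫ ρ in r'..t₁, dist (u ρ) (u r') ^ 2)
        ≤ (Q + D) * (1 - θ) := by
      have h1 : |lam|/2 * (∫ ρ in r'..t₁, dist (u ρ) (u r') ^ 2)
          ≤ |lam|/2 * (4*(Q+D)*(t₁ - r')) :=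
        mul_le_mul_of_nonneg_left hHT.1 (by positivity)
      have h2 : |lam|/2 * (4*(Q+D)*(t₁ - r')) = (Q+D) * (2 * |lam| * (t₁ - r')) := by ring
      have h3 : (Q+D) * (2 * |lam| * (t₁ - r')) ≤ (Q+D) * (1 - θ) :=
        mul_le_mul_of_nonneg_left hlamw (by linarith)
      linarith
    have hfinal : (0:ℝ) ≤ 1/2 * dist (u t₁) (u r') ^ 2 := by positivity
    -- 0 ≤ Q - D + (Q+D)(1-θ) = (2-θ)Q - θD ≤ 2Q - θD < 2η - θD = -θD/2 < 0
    have hcontr : (2 - θ)*Q - θ*D < 0 := by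
      have h1 : 0 ≤ θ*Q := mul_nonneg hθp.le hQ0
      have h2 : 2*Q < θ*D/2 := by
        rw [hη] at hQη
        linarith
      linarith [mul_pos hθp hDpos]
    linarith [hfin1, hsplit2, hH4, hfinal, hcontr]
  · -- case c = t
    have htS : t ∉ S := by
      intro hmem
      exact absurd hmem.2 (not_le.mpr hcon)
    have ht0 : 0 < t := lt_of_lt_of_le hs hst
    have hφt : φ (u t) ≠ ⊤ := hne t ht0
    have hlt : (((φ (u s)).toReal : ℝ) : EReal) < φ (u t) := by
      rw [show φ (u t) = (((φ (u t)).toReal : ℝ) : EReal) from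
        (EReal.coe_toReal hφt (hbot _)).symm]
      rw [EReal.coe_lt_coe_iff]
      exact hcon
    have hev := hlsc (u t) _ hlt
    rw [Metric.eventually_nhds_iff] at hev
    obtain ⟨ρ0, hρ0, hball⟩ := hev
    set η2 := ρ0^2/9 with hη2
    have hη2p : 0 < η2 := by positivity
    have hPt := (hPrCont t ⟨hst, le_refl t⟩).tendsto
    rw [Metric.tendsto_nhds] at hPt
    obtain ⟨δ, hδ, hballP⟩ := Metric.mem_nhdsWithin_iff.mp (hPt η2 hη2p)
    set δ0' : ℝ := 1/(2*(|lam|+1)) with hδ0'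
    have hδ0p' : 0 < δ0' := by positivity
    have hlt2 : t - min δ δ0' < c := by
      rw [hceq]
      have := lt_min hδ hδ0p'
      linarith
    obtain ⟨r', hr'S, hr'gt⟩ := exists_lt_of_lt_csSup ⟨s, hsS⟩ hlt2
    have hr'c : r' ≤ c := le_csSup hbdd hr'S
    have hr't : r' < t := by
      rcases lt_or_eq_of_le (hr'c.trans_eq hceq) with h | h
      · exact h
      · exact absurd (h ▸ hr'S) htS
    have hr's : s ≤ r' := hr'S.1.1
    have hr'0 : 0 < r' := lt_of_lt_of_le hs hr's
    have hψr' : (φ (u r')).toReal ≤ (φ (u s)).toReal := hr'S.2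
    have hwidtot : t - r' ≤ 1/(2*(|lam|+1)) := by
      have h1 : t - min δ δ0' < r' := hr'gt
      have h2 : min δ δ0' ≤ δ0' := min_le_right _ _
      rw [hδ0'] at h2
      linarith
    set Qt := ∫ ρ in r'..t, W ρ with hQt
    have hQt0 : 0 ≤ Qt := hWnonneg r' t hr'0 hr't.le
    have hQtsmall : Qt < η2 := by
      have hQPr : Qt = Pr t - Pr r' := hPrsplit r' t hr's hr't.le (le_refl t)
      have hmem : r' ∈ Metric.ball t δ ∩ Set.Icc s t := by
        constructor
        · rw [Metric.mem_ball, Real.dist_eq, abs_lt]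
          constructor
          · have := min_le_left δ δ0'; linarith
          · linarith [hδ]
        · exact ⟨hr's, hr't.le⟩
      have h9 : dist (Pr r') (Pr t) < η2 := hballP hmem
      rw [Real.dist_eq, abs_lt] at h9
      rw [hQPr]
      linarith [h9.1]
    obtain ⟨hmloc', _⟩ := hB3 (u r') (hne r' hr'0)
    have hh'int : IntervalIntegrable (fun ρ => dist (u ρ) (u r') ^ 2) volume r' t :=
      locInt_intervalIntegrable hmloc' hr'0 hr't.le
    have hkey : ∀ r ∈ Set.Ioc r' t, 1/2 * dist (u r) (u r') ^ 2 ≤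
        Qt + |lam|/2 * ∫ ρ in r'..r, dist (u ρ) (u r') ^ 2 := by
      intro r hr
      have h1 := B_basic hψloc hB3 hr'0 (hne r' hr'0) hr.1
      have h2 := hWb r' r hr'0 hr's hr.1.le hψr'
      have h3 : (∫ ρ in r'..r, W ρ) ≤ ∫ ρ in r'..t, W ρ := by
        have hadj := intervalIntegral.integral_add_adjacent_intervals
          (hWI r' r hr'0 hr.1.le) (hWI r t (lt_of_lt_of_le hr'0 hr.1.le) hr.2)
        have hpos := hWnonneg r t (lt_of_lt_of_le hr'0 hr.1.le) hr.2
        linarith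
      simp only [hQt]
      linarith
    have hHT := halfTrick (lam := lam) hr't hwidtot
      (fun ρ _ => by positivity) hh'int hkey hQt0
    have hpt := hHT.2 t ⟨hr't, le_refl t⟩
    have hdsq : dist (u t) (u r') ^ 2 < ρ0 ^ 2 := by
      have : 4 * Qt < 4 * η2 := by linarith
      rw [hη2] at this
      nlinarith [hρ0]
    have hdlt : dist (u r') (u t) < ρ0 := by
      rw [dist_comm]
      exact lt_of_pow_lt_pow_left₀ 2 hρ0.le hdsq
    have hφr' : (((φ (u s)).toReal : ℝ) : EReal) < φ (u r') := hball hdlt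
    have hr'top : φ (u r') ≠ ⊤ := hne r' hr'0
    rw [show φ (u r') = (((φ (u r')).toReal : ℝ) : EReal) from
      (EReal.coe_toReal hr'top (hbot _)).symm, EReal.coe_lt_coe_iff] at hφr'
    linarith

end Bside


section Bside2

variable {X : Type*} [MetricSpace X] {φ : X → EReal} {lam : ℝ} {u : ℝ → X}

lemma B_contAt (hψloc : LocallyIntegrableOn (fun r => (φ (u r)).toReal) (Set.Ioi 0) volume)
    (hne : ∀ t ∈ Set.Ioi (0:ℝ), φ (u t) ≠ ⊤)
    (hB3 : ∀ v : X, φ v ≠ ⊤ →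
      LocallyIntegrableOn (fun r => dist (u r) v ^ 2) (Set.Ioi 0) volume ∧
      ∀ s t : ℝ, 0 < s → s < t →
        1/2 * dist (u t) v ^2 - 1/2 * dist (u s) v ^2 +
          ∫ r in s..t, ((φ (u r)).toReal + lam/2 * dist (u r) v ^2) ≤
          (t - s) * (φ v).toReal)
    (hmono : ∀ ⦃p q : ℝ⦄, 0 < p → p ≤ q → (φ (u q)).toReal ≤ (φ (u p)).toReal)
    {x₀ : ℝ} (hx₀ : 0 < x₀) : ContinuousAt u x₀ := by
  rw [Metric.continuousAt_iff]
  intro ε hε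
  set δ1 : ℝ := min (1/(2*(|lam|+1))) (x₀/2) with hδ1
  have hδ1p : 0 < δ1 := lt_min (by positivity) (by linarith)
  have hδ1w : δ1 ≤ 1/(2*(|lam|+1)) := min_le_left _ _
  have hδ1x : δ1 ≤ x₀/2 := min_le_right _ _
  set K1 := (φ (u x₀)).toReal - (φ (u (x₀ + δ1))).toReal with hK1
  have hK10 : 0 ≤ K1 := sub_nonneg.mpr (hmono hx₀ (by linarith))
  set K2 := (φ (u (x₀ - δ1))).toReal - (φ (u x₀)).toReal with hK2
  have hK20 : 0 ≤ K2 := sub_nonneg.mpr (hmono (by linarith) (by linarith))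
  set CC := 4*(K1 + K2 + 1) with hCC
  have hCC0 : 0 < CC := by rw [hCC]; linarith
  have key : ∀ y, dist y x₀ < δ1 → dist (u y) (u x₀) ^ 2 ≤ CC * |y - x₀| := by
    intro y hy
    rw [Real.dist_eq] at hy
    have hya := abs_lt.mp hy
    have hy0 : 0 < y := by linarith [hya.1]
    rcases lt_trichotomy y x₀ with hlt | heq | hgt
    · -- y < x₀ : base point y
      have habs : |y - x₀| = x₀ - y := by rw [abs_of_neg (by linarith)]; ring
      have hkey : ∀ r ∈ Set.Ioc y x₀, 1/2 * dist (u r) (u y) ^ 2 ≤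
          (x₀ - y) * K2 + |lam|/2 * ∫ ρ in y..r, dist (u ρ) (u y) ^ 2 := by
        intro r hr
        have h1 := B_basic hψloc hB3 hy0 (hne y hy0) hr.1
        have h2 : (∫ ρ in y..r, ((φ (u y)).toReal - (φ (u ρ)).toReal)) ≤ (r - y) * K2 := by
          have hb : ∀ ρ ∈ Set.Icc y r,
              (φ (u y)).toReal - (φ (u ρ)).toReal ≤ K2 := by
            intro ρ hρ
            have e1 : (φ (u y)).toReal ≤ (φ (u (x₀ - δ1))).toReal :=
              hmono (by linarith) (by linarith [hya.1])
            have e2 : (φ (u x₀)).toReal ≤ (φ (u ρ)).toReal :=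
              hmono (lt_of_lt_of_le hy0 hρ.1) (le_trans hρ.2 hr.2)
            rw [hK2]; linarith
          have h3 := intervalIntegral.integral_mono_on hr.1.le
            ((_root_.intervalIntegrable_const).sub
              (locInt_intervalIntegrable hψloc hy0 hr.1.le))
            _root_.intervalIntegrable_const hb
          rw [intervalIntegral.integral_const, smul_eq_mul] at h3
          have h4 : (r - y) * K2 ≤ (r - y) * K2 := le_refl _
          linarith
        have h2' : (r - y) * K2 ≤ (x₀ - y) * K2 :=
          mul_le_mul_of_nonneg_right (by linarith [hr.2]) hK20
        calc 1/2 * dist (u r) (u y) ^ 2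
            ≤ (∫ ρ in y..r, ((φ (u y)).toReal - (φ (u ρ)).toReal))
              + |lam|/2 * ∫ ρ in y..r, dist (u ρ) (u y) ^ 2 := h1
          _ ≤ (x₀ - y) * K2 + |lam|/2 * ∫ ρ in y..r, dist (u ρ) (u y) ^ 2 := by
              exact add_le_add (le_trans h2 h2') le_rfl
      obtain ⟨hmloc', _⟩ := hB3 (u y) (hne y hy0)
      have hint' : IntervalIntegrable (fun ρ => dist (u ρ) (u y) ^ 2) volume y x₀ :=
        locInt_intervalIntegrable hmloc' hy0 hlt.le
      have hHT := halfTrick (lam := lam) hlt (by linarith [hya.1, hδ1w])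
        (fun ρ _ => by positivity) hint' hkey
        (mul_nonneg (by linarith) hK20)
      have hpt := hHT.2 x₀ ⟨hlt, le_refl x₀⟩
      rw [dist_comm, habs]
      calc dist (u x₀) (u y) ^ 2 ≤ 4 * ((x₀ - y)*K2) := hpt
        _ ≤ CC * (x₀ - y) := by rw [hCC]; nlinarith [hK10, hK20]
    · rw [heq]; simp [dist_self]
    · -- x₀ < y : base point x₀
      have habs : |y - x₀| = y - x₀ := abs_of_pos (by linarith)
      have hkey : ∀ r ∈ Set.Ioc x₀ y, 1/2 * dist (u r) (u x₀) ^ 2 ≤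
          (y - x₀) * K1 + |lam|/2 * ∫ ρ in x₀..r, dist (u ρ) (u x₀) ^ 2 := by
        intro r hr
        have h1 := B_basic hψloc hB3 hx₀ (hne x₀ hx₀) hr.1
        have h2 : (∫ ρ in x₀..r, ((φ (u x₀)).toReal - (φ (u ρ)).toReal)) ≤ (r - x₀) * K1 := by
          have hb : ∀ ρ ∈ Set.Icc x₀ r,
              (φ (u x₀)).toReal - (φ (u ρ)).toReal ≤ K1 := by
            intro ρ hρ
            have e2 : (φ (u (x₀ + δ1))).toReal ≤ (φ (u ρ)).toReal :=
              hmono (lt_of_lt_of_le hx₀ hρ.1) (by linarith [hρ.2, hr.2, hya.2])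
            rw [hK1]; linarith
          have h3 := intervalIntegral.integral_mono_on hr.1.le
            ((_root_.intervalIntegrable_const).sub
              (locInt_intervalIntegrable hψloc hx₀ hr.1.le))
            _root_.intervalIntegrable_const hb
          rw [intervalIntegral.integral_const, smul_eq_mul] at h3
          linarith
        have h2' : (r - x₀) * K1 ≤ (y - x₀) * K1 :=
          mul_le_mul_of_nonneg_right (by linarith [hr.2]) hK10
        calc 1/2 * dist (u r) (u x₀) ^ 2
            ≤ (∫ ρ in x₀..r, ((φ (u x₀)).toReal - (φ (u ρ)).toReal))
              + |lam|/2 * ∫ ρ in x₀..r, dist (u ρ) (u x₀) ^ 2 := h1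
          _ ≤ (y - x₀) * K1 + |lam|/2 * ∫ ρ in x₀..r, dist (u ρ) (u x₀) ^ 2 := by
              exact add_le_add (le_trans h2 h2') le_rfl
      obtain ⟨hmloc', _⟩ := hB3 (u x₀) (hne x₀ hx₀)
      have hint' : IntervalIntegrable (fun ρ => dist (u ρ) (u x₀) ^ 2) volume x₀ y :=
        locInt_intervalIntegrable hmloc' hx₀ hgt.le
      have hHT := halfTrick (lam := lam) hgt (by linarith [hya.2, hδ1w])
        (fun ρ _ => by positivity) hint' hkey
        (mul_nonneg (by linarith) hK10)
      have hpt := hHT.2 y ⟨hgt, le_refl y⟩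
      rw [habs]
      calc dist (u y) (u x₀) ^ 2 ≤ 4 * ((y - x₀)*K1) := hpt
        _ ≤ CC * (y - x₀) := by rw [hCC]; nlinarith [hK10, hK20]
  refine ⟨min δ1 (ε^2/(CC+1)), ?_, ?_⟩
  · apply lt_min hδ1p
    apply div_pos (by positivity) (by linarith)
  · intro y hy
    have h1 := key y (lt_of_lt_of_le hy (min_le_left _ _))
    have h2 : |y - x₀| < ε^2/(CC+1) := by
      rw [← Real.dist_eq]
      exact lt_of_lt_of_le hy (min_le_right _ _)
    have h3 : dist (u y) (u x₀) ^ 2 < ε ^ 2 := by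
      apply lt_of_le_of_lt h1
      have s1 : CC * |y - x₀| < CC * (ε^2/(CC+1)) := mul_lt_mul_of_pos_left h2 hCC0
      apply lt_of_lt_of_le s1
      have hq : ε^2/(CC+1)*(CC+1) = ε^2 := div_mul_cancel₀ _ (by linarith)
      have hq0 : (0:ℝ) ≤ ε^2/(CC+1) := by positivity
      nlinarith
    exact lt_of_pow_lt_pow_left₀ 2 hε.le h3

lemma B_EVI (hbot : ∀ y, φ y ≠ ⊥) (hlsc : LowerSemicontinuous φ)
    (hne : ∀ t ∈ Set.Ioi (0:ℝ), φ (u t) ≠ ⊤)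
    (hψloc : LocallyIntegrableOn (fun r => (φ (u r)).toReal) (Set.Ioi 0) volume)
    (hB3 : ∀ v : X, φ v ≠ ⊤ →
      LocallyIntegrableOn (fun r => dist (u r) v ^ 2) (Set.Ioi 0) volume ∧
      ∀ s t : ℝ, 0 < s → s < t →
        1/2 * dist (u t) v ^2 - 1/2 * dist (u s) v ^2 +
          ∫ r in s..t, ((φ (u r)).toReal + lam/2 * dist (u r) v ^2) ≤
          (t - s) * (φ v).toReal)
    (hmono : ∀ ⦃p q : ℝ⦄, 0 < p → p ≤ q → (φ (u q)).toReal ≤ (φ (u p)).toReal)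
    {t₀ : ℝ} (ht₀ : 0 < t₀) (hca : ContinuousAt u t₀) : EVIineq φ lam u t₀ := by
  intro v hv
  obtain ⟨hmloc, hineq⟩ := hB3 v hv
  apply evi_make_pt hv (hbot v) (hne t₀ ht₀) (hbot _)
  set a := (φ v).toReal with ha
  have T2 := psi_tendsto_of_contAt hbot hlsc hne hmono ht₀ hca
  have hmca : ContinuousAt (fun r => dist (u r) v ^ 2) t₀ :=
    (hca.dist continuousAt_const).pow 2
  have T3 := avg_tendsto hmloc ht₀ hmca
  have hR : Tendsto (fun h => 2*a - 2*(φ (u (t₀+h))).toReal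
        - lam * ((∫ ρ in t₀..(t₀+h), dist (u ρ) v ^ 2)/h)) (nhdsWithin 0 (Set.Ioi 0))
      (nhds (2*a - 2*(φ (u t₀)).toReal - lam * dist (u t₀) v ^ 2)) :=
    (tendsto_const_nhds.sub (T2.const_mul 2)).sub (T3.const_mul lam)
  have hval : 2*a - 2*(φ (u t₀)).toReal - lam * dist (u t₀) v ^ 2
      = 2 * (a - (φ (u t₀)).toReal) - lam * dist (u t₀) v ^ 2 := by ring
  rw [hval] at hR
  apply dini_le_of_eventually _ hR
  filter_upwards [self_mem_nhdsWithin] with h hh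
  have hh0 : (0:ℝ) < h := hh
  have hpair := B_pair hψloc hmloc hineq ht₀ (show t₀ < t₀ + h by linarith)
  have hid : t₀ + h - t₀ = h := by ring
  rw [hid] at hpair
  have hψlb : h * (φ (u (t₀+h))).toReal ≤ ∫ ρ in t₀..(t₀+h), (φ (u ρ)).toReal := by
    have hb : ∀ ρ ∈ Set.Icc t₀ (t₀+h), (φ (u (t₀+h))).toReal ≤ (φ (u ρ)).toReal := by
      intro ρ hρ
      exact hmono (lt_of_lt_of_le ht₀ hρ.1) hρ.2
    have h3 := intervalIntegral.integral_mono_on (by linarith : t₀ ≤ t₀+h)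
      _root_.intervalIntegrable_const (locInt_intervalIntegrable hψloc ht₀ (by linarith)) hb
    rw [intervalIntegral.integral_const, smul_eq_mul, hid] at h3
    linarith
  show (dist (u (t₀+h)) v ^ 2 - dist (u t₀) v ^ 2)/h ≤ _
  have h1 : dist (u (t₀+h)) v ^ 2 - dist (u t₀) v ^ 2 ≤
      2*(h*a - h*(φ (u (t₀+h))).toReal - lam/2 * ∫ ρ in t₀..(t₀+h), dist (u ρ) v ^ 2) := by
    linarith [hpair, hψlb]
  have h2 := (div_le_div_iff_of_pos_right hh0).mpr h1
  have h3 : 2*(h*a - h*(φ (u (t₀+h))).toReal - lam/2 * ∫ ρ in t₀..(t₀+h), dist (u ρ) v ^ 2)/h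
      = 2*a - 2*(φ (u (t₀+h))).toReal
        - lam * ((∫ ρ in t₀..(t₀+h), dist (u ρ) v ^ 2)/h) := by
    field_simp
  linarith [h2, h3]

end Bside2


set_option maxHeartbeats 1000000

open MeasureTheory in
theorem stmt9 {X : Type*} [MetricSpace X] (φ : X → EReal) (lam : ℝ)
    (hbot : ∀ y, φ y ≠ ⊥) (hproper : ∃ y, φ y ≠ ⊤) (hlsc : LowerSemicontinuous φ)
    (u : ℝ → X) (hu : ∀ t ∈ Set.Ioi (0:ℝ), u t ∈ closure {y : X | φ y ≠ ⊤}) :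
    letI A : Prop := IsEVISolution φ lam u
    letI B : Prop :=
      (∀ t ∈ Set.Ioi (0:ℝ), φ (u t) ≠ ⊤) ∧
      LocallyIntegrableOn (fun r => (φ (u r)).toReal) (Set.Ioi 0) ∧
      ∀ v : X, φ v ≠ ⊤ →
        LocallyIntegrableOn (fun r => dist (u r) v ^ 2) (Set.Ioi 0) ∧
        ∀ s t : ℝ, 0 < s → s < t →
          (1 / 2) * dist (u t) v ^ 2 - (1 / 2) * dist (u s) v ^ 2 +
              ∫ r in s..t, ((φ (u r)).toReal + lam / 2 * dist (u r) v ^ 2) ≤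
            (t - s) * (φ v).toReal
    letI C : Prop :=
      ∀ s t : ℝ, 0 < s → s < t → ∀ v : X, φ v ≠ ⊤ →
        ((Real.exp (lam * (t - s)) / 2 * dist (u t) v ^ 2
            - 1 / 2 * dist (u s) v ^ 2 : ℝ) : EReal) ≤
          ((Elam lam (t - s) : ℝ) : EReal) * (φ v - φ (u t))
    (A ↔ B) ∧ (A ↔ C) ∧
      (A → ∀ s t : ℝ, 0 < s → s ≤ t → φ (u t) ≤ φ (u s)) := by

  refine ⟨⟨?_, ?_⟩, ⟨?_, ?_⟩, ?_⟩
  · -- A → B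
    rintro ⟨hcont, hne, hevi⟩
    have hmono : ∀ ⦃p q : ℝ⦄, 0 < p → p ≤ q → (φ (u q)).toReal ≤ (φ (u p)).toReal :=
      fun p q hp hpq => A_mono hbot hlsc hcont hne hevi hp hpq
    exact ⟨hne, A_psi_locInt hlsc hcont hmono,
      fun v hv => ⟨A_m_locInt hcont v,
        fun s t hs hst => A_to_B_ineq hbot hlsc hcont hne hevi hmono hv hs hst⟩⟩
  · -- B → A
    rintro ⟨hne, hψloc, hB3⟩
    have hmono : ∀ ⦃p q : ℝ⦄, 0 < p → p ≤ q → (φ (u q)).toReal ≤ (φ (u p)).toReal :=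
      fun p q hp hpq => B_mono hbot hlsc hne hψloc hB3 hp hpq
    have hca : ∀ t₀ : ℝ, t₀ ∈ Set.Ioi (0:ℝ) → ContinuousAt u t₀ :=
      fun t₀ ht₀ => B_contAt hψloc hne hB3 hmono ht₀
    exact ⟨fun t ht => (hca t ht).continuousWithinAt, hne,
      fun t ht => B_EVI hbot hlsc hne hψloc hB3 hmono ht (hca t ht)⟩
  · -- A → C
    rintro ⟨hcont, hne, hevi⟩
    intro s t hs hst v hv
    have hmono : ∀ ⦃p q : ℝ⦄, 0 < p → p ≤ q → (φ (u q)).toReal ≤ (φ (u p)).toReal :=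
      fun p q hp hpq => A_mono hbot hlsc hcont hne hevi hp hpq
    have hreal := A_to_C_real hbot hcont hne hevi hmono hv hs hst
    have hnet : φ (u t) ≠ ⊤ := hne t (Set.mem_Ioi.mpr (by linarith))
    rw [ereal_sub_eq hv (hbot v) hnet (hbot _), ← EReal.coe_mul, EReal.coe_le_coe_iff]
    linarith
  · -- C → A
    intro hC
    exact ⟨fun t ht => (C_contAt hbot hproper hC ht).continuousWithinAt,
      fun t ht => C_ne_top hbot hproper hC ht,
      fun t ht => C_to_EVI hbot hproper hlsc hC ht⟩
  · -- A → monotonicity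
    rintro ⟨hcont, hne, hevi⟩
    intro s t hs hst
    have h := A_mono hbot hlsc hcont hne hevi hs hst
    have hnet : φ (u t) ≠ ⊤ := hne t (Set.mem_Ioi.mpr (by linarith))
    have hnes : φ (u s) ≠ ⊤ := hne s (Set.mem_Ioi.mpr hs)
    rw [show φ (u t) = (((φ (u t)).toReal : ℝ) : EReal) from
        (EReal.coe_toReal hnet (hbot _)).symm,
      show φ (u s) = (((φ (u s)).toReal : ℝ) : EReal) from
        (EReal.coe_toReal hnes (hbot _)).symm]
    exact EReal.coe_le_coe_iff.mpr h
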